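/- arXiv:1005.4503 — 4 statements merged into one kernel-verified Lean document; each statement's English description precedes it below -/
import Mathlib

section
/- Let K be a field, let M >= 1 be an integer, and for each p >= 1 let b_{p,0} be in m^{M+p-1} and b_{p,i} in m^{M+p} for i = 1,...,n, where m is the maximal ideal of K[[x_1,...,x_n]]. Let phi_p be the local K-algebra endomorphism of K[[x_1,...,x_n]] determined by substituting x_i + b_{p,i} for x_i, let Phi_p = phi_p o phi_{p-1} o ... o phi_1, let v_p = 1 + b_{p,0}, and define u_p = v_p * phi_p(u_{p-1}) inductively with u_0 = 1. Then: (1) for each i there exists b_i in m^{M+1} such that the sequence (Phi_p(x_i))_{p>=1} converges in the m-adic topology to x_i + b_i (i.e. for every N there is P with Phi_p(x_i) - (x_i + b_i) in m^N for all p >= P), and the substitution map x_i -> x_i + b_i is a local K-algebra automorphism of K[[x_1,...,x_n]]; (2) the sequence (u_p)_{p>=1} converges in the m-adic topology to a unit of the form 1 + b_0 with b_0 in m^M. -/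
/-!  Setup: formal power series ring `K[[x_1,…,x_n]]`, its maximal ideal,
formal partial derivatives, Jacobian and Tjurina ideals, the order of a
power series, and right/contact equivalence. -/

/-- The formal partial derivative of a multivariate power series with respect
to the `i`-th variable. -/
noncomputable def pderiv {n : ℕ} {K : Type} [Field K] (i : Fin n)
    (f : MvPowerSeries (Fin n) K) : MvPowerSeries (Fin n) K :=
  fun d => ((d i : K) + 1) * MvPowerSeries.coeff (d + Finsupp.single i 1) f

/-- The Jacobian ideal `J(f) = ⟨f_{x_1},…,f_{x_n}⟩`. -/
noncomputable def jacobianIdeal {n : ℕ} {K : Type} [Field K]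
    (f : MvPowerSeries (Fin n) K) : Ideal (MvPowerSeries (Fin n) K) :=
  Ideal.span (Set.range fun i => pderiv i f)

/-- The Tjurina ideal `T(f) = ⟨f⟩ + J(f)`. -/
noncomputable def tjurinaIdeal {n : ℕ} {K : Type} [Field K]
    (f : MvPowerSeries (Fin n) K) : Ideal (MvPowerSeries (Fin n) K) :=
  Ideal.span {f} ⊔ jacobianIdeal f

/-- The maximal ideal `m = ⟨x_1,…,x_n⟩` of `K[[x_1,…,x_n]]`. -/
noncomputable def maxIdeal (n : ℕ) (K : Type) [Field K] :
    Ideal (MvPowerSeries (Fin n) K) :=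
  Ideal.span (Set.range (MvPowerSeries.X : Fin n → MvPowerSeries (Fin n) K))

/-- The order of a power series: the largest `k` with `f ∈ m^k`
(for `f ≠ 0` this supremum is attained). -/
noncomputable def ord {n : ℕ} {K : Type} [Field K]
    (f : MvPowerSeries (Fin n) K) : ℕ :=
  sSup {k : ℕ | f ∈ maxIdeal n K ^ k}

/-- Right equivalence: `f = φ(g)` for a `K`-algebra automorphism `φ`. -/
def RightEquiv {n : ℕ} {K : Type} [Field K]
    (f g : MvPowerSeries (Fin n) K) : Prop :=
  ∃ φ : MvPowerSeries (Fin n) K ≃ₐ[K] MvPowerSeries (Fin n) K, f = φ g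

/-- Contact equivalence: `f = u * φ(g)` for a unit `u` and a `K`-algebra
automorphism `φ`. -/
def ContactEquiv {n : ℕ} {K : Type} [Field K]
    (f g : MvPowerSeries (Fin n) K) : Prop :=
  ∃ (u : (MvPowerSeries (Fin n) K)ˣ)
    (φ : MvPowerSeries (Fin n) K ≃ₐ[K] MvPowerSeries (Fin n) K),
    f = (u : MvPowerSeries (Fin n) K) * φ g

/-- Convergence of a sequence of power series in the `m`-adic topology. -/
def MAdicTendsto {n : ℕ} {K : Type} [Field K]
    (g : ℕ → MvPowerSeries (Fin n) K) (l : MvPowerSeries (Fin n) K) : Prop :=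
  ∀ N : ℕ, ∃ P : ℕ, ∀ p ≥ P, g p - l ∈ maxIdeal n K ^ N

namespace CL
open MvPowerSeries

variable {n : ℕ} {K : Type} [Field K]

/-- total degree of an exponent -/
def deg (d : Fin n →₀ ℕ) : ℕ := ∑ i, d i

lemma deg_add (d e : Fin n →₀ ℕ) : deg (d + e) = deg d + deg e := by
  simp [deg, Finset.sum_add_distrib]

lemma deg_single (i : Fin n) : deg (Finsupp.single i 1) = 1 := by
  simp [deg, Finsupp.single_apply]

lemma le_deg (d : Fin n →₀ ℕ) (i : Fin n) : d i ≤ deg d :=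
  Finset.single_le_sum (f := fun j => d j) (fun _ _ => Nat.zero_le _) (Finset.mem_univ i)

lemma deg_eq_zero_iff {d : Fin n →₀ ℕ} : deg d = 0 ↔ d = 0 := by
  constructor
  · intro h
    ext i
    have h2 := le_deg d i
    simp only [Finsupp.coe_zero, Pi.zero_apply]
    omega
  · rintro rfl; simp [deg]

/-- The ideal of power series of order ≥ N. -/
def OId (n : ℕ) (K : Type) [Field K] (N : ℕ) : Ideal (MvPowerSeries (Fin n) K) where
  carrier := {f | ∀ d : Fin n →₀ ℕ, deg d < N → coeff d f = 0}
  add_mem' := by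
    intro f g hf hg d hd
    simp [map_add, hf d hd, hg d hd]
  zero_mem' := by intro d hd; simp
  smul_mem' := by
    classical
    intro c f hf d hd
    simp only [smul_eq_mul]
    rw [coeff_mul]
    apply Finset.sum_eq_zero
    rintro ⟨d1, d2⟩ hmem
    rw [Finset.HasAntidiagonal.mem_antidiagonal] at hmem
    have : deg d2 < N := by
      have := deg_add d1 d2
      rw [hmem] at this
      omega
    simp [hf d2 this]

lemma mem_OId {N : ℕ} {f : MvPowerSeries (Fin n) K} :
    f ∈ OId n K N ↔ ∀ d : Fin n →₀ ℕ, deg d < N → coeff d f = 0 := Iff.rfl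

lemma X_mem_maxIdeal (i : Fin n) : (X i : MvPowerSeries (Fin n) K) ∈ maxIdeal n K :=
  Ideal.subset_span ⟨i, rfl⟩

lemma mul_mem_OId {a b : ℕ} {f g : MvPowerSeries (Fin n) K}
    (hf : f ∈ OId n K a) (hg : g ∈ OId n K b) : f * g ∈ OId n K (a + b) := by
  classical
  intro d hd
  rw [coeff_mul]
  apply Finset.sum_eq_zero
  rintro ⟨d1, d2⟩ hmem
  rw [Finset.HasAntidiagonal.mem_antidiagonal] at hmem
  dsimp only
  have hdd : deg d1 + deg d2 < a + b := by
    have := deg_add d1 d2; rw [hmem] at this; omega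
  rcases Nat.lt_or_ge (deg d1) a with h | h
  · simp [hf d1 h]
  · have : deg d2 < b := by omega
    simp [hg d2 this]

lemma pow_le_OId (N : ℕ) : maxIdeal n K ^ N ≤ OId n K N := by
  induction N with
  | zero =>
    intro f _ d hd; omega
  | succ N ih =>
    rw [pow_succ]
    apply Ideal.mul_le.2
    intro f hf g hg
    have h1 : f ∈ OId n K N := ih hf
    have h2 : g ∈ OId n K 1 := by
      refine Ideal.span_le.2 ?_ hg
      rintro x ⟨i, rfl⟩
      intro d hd
      have : d = 0 := deg_eq_zero_iff.1 (by omega)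
      subst this
      simp [MvPowerSeries.coeff_X]
      intro h
      exfalso
      have := deg_single i
      rw [← h] at this
      simp [deg] at this
    exact mul_mem_OId h1 h2

open Classical in
/-- Decomposition component: the part of `g` whose leading variable is `i`, divided by `X i`. -/
noncomputable def Dcomp (g : MvPowerSeries (Fin n) K) (i : Fin n) : MvPowerSeries (Fin n) K :=
  fun d => if ∀ j, j < i → d j = 0 then coeff (d + Finsupp.single i 1) g else 0

lemma coeff_Dcomp (g : MvPowerSeries (Fin n) K) (i : Fin n) (d : Fin n →₀ ℕ) :
    coeff d (Dcomp g i)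
      = if ∀ j, j < i → d j = 0 then coeff (d + Finsupp.single i 1) g else 0 := by
  classical
  rw [MvPowerSeries.coeff_apply]
  simp [Dcomp]

lemma coeff_X_mul' (h : MvPowerSeries (Fin n) K) (i : Fin n) (d : Fin n →₀ ℕ) :
    coeff d (X i * h)
      = if Finsupp.single i 1 ≤ d then coeff (d - Finsupp.single i 1) h else 0 := by
  classical
  rw [show (X i : MvPowerSeries (Fin n) K) = monomial (Finsupp.single i 1) 1 from rfl,
    coeff_monomial_mul]
  simp

lemma single_le_iff' {i : Fin n} {d : Fin n →₀ ℕ} :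
    Finsupp.single i 1 ≤ d ↔ 1 ≤ d i := by
  rw [Finsupp.single_le_iff]

lemma decomp_eq (g : MvPowerSeries (Fin n) K) :
    g = C (constantCoeff g) + ∑ i, X i * Dcomp g i := by
  classical
  apply MvPowerSeries.ext
  intro d
  rw [map_add, map_sum]
  by_cases hd : d = 0
  · subst hd
    have : ∀ i ∈ Finset.univ, coeff (0 : Fin n →₀ ℕ) (X i * Dcomp g i) = 0 := by
      intro i _
      rw [coeff_X_mul']
      rw [if_neg]
      rw [single_le_iff']
      simp
    rw [Finset.sum_eq_zero this]
    simp [coeff_C]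
  · -- d ≠ 0 : the constant term contributes 0 and exactly one summand survives
    have hsupp : d.support.Nonempty := by
      rw [Finsupp.support_nonempty_iff]; exact hd
    set i0 := d.support.min' hsupp with hi0
    have hi0mem : i0 ∈ d.support := d.support.min'_mem hsupp
    have hdi0 : 1 ≤ d i0 := by
      have := Finsupp.mem_support_iff.1 hi0mem
      omega
    have hmin : ∀ j, j < i0 → d j = 0 := by
      intro j hj
      by_contra hne
      have : j ∈ d.support := Finsupp.mem_support_iff.2 hne
      exact absurd (d.support.min'_le j this) (by omega)
    rw [Finset.sum_eq_single i0]
    · rw [coeff_X_mul', if_pos (single_le_iff'.2 hdi0), coeff_Dcomp, if_pos, tsub_add_cancel_of_le]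
      · simp [coeff_C, hd]
      · exact single_le_iff'.2 hdi0
      · intro j hj
        rw [Finsupp.tsub_apply, hmin j hj]
        simp
    · intro i _ hne
      rw [coeff_X_mul']
      rcases lt_or_gt_of_ne hne with hlt | hgt
      · rw [if_neg]
        rw [single_le_iff', hmin i hlt]
        omega
      · by_cases hle : Finsupp.single i 1 ≤ d
        · rw [if_pos hle, coeff_Dcomp, if_neg]
          intro hall
          have := hall i0 hgt
          rw [Finsupp.tsub_apply] at this
          rw [Finsupp.single_apply, if_neg (by exact fun h => absurd h (by omega))] at this
          omega
        · rw [if_neg hle]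
    · intro habs
      exact absurd (Finset.mem_univ i0) habs

lemma Dcomp_mem {N : ℕ} {g : MvPowerSeries (Fin n) K} (hg : g ∈ OId n K (N + 1)) (i : Fin n) :
    Dcomp g i ∈ OId n K N := by
  intro d hd
  rw [coeff_Dcomp]
  split
  · apply hg
    rw [deg_add, deg_single]
    omega
  · rfl

lemma OId_le_pow (N : ℕ) : OId n K N ≤ maxIdeal n K ^ N := by
  induction N with
  | zero => intro f _; simp
  | succ N ih =>
    intro g hg
    have h0 : constantCoeff g = 0 := by
      have := hg 0 (by simp [deg])
      rwa [coeff_zero_eq_constantCoeff_apply] at this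
    have hdec := decomp_eq g
    rw [h0, map_zero, zero_add] at hdec
    rw [hdec, pow_succ']
    apply Ideal.sum_mem
    intro i _
    exact Ideal.mul_mem_mul (X_mem_maxIdeal i) (ih (Dcomp_mem hg i))

lemma mem_pow_iff {N : ℕ} {f : MvPowerSeries (Fin n) K} :
    f ∈ maxIdeal n K ^ N ↔ ∀ d : Fin n →₀ ℕ, deg d < N → coeff d f = 0 :=
  ⟨fun h => pow_le_OId N h, fun h => OId_le_pow N h⟩

lemma eq_zero_of_forall_mem {f : MvPowerSeries (Fin n) K}
    (h : ∀ N, f ∈ maxIdeal n K ^ N) : f = 0 := by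
  apply MvPowerSeries.ext
  intro d
  rw [map_zero]
  exact mem_pow_iff.1 (h (deg d + 1)) d (by omega)

/-! ### Limits of Cauchy sequences -/

lemma pow_le_pow' {a b : ℕ} (h : a ≤ b) : maxIdeal n K ^ b ≤ maxIdeal n K ^ a :=
  Ideal.pow_le_pow_right h

/-- coefficient-wise limit of a Cauchy sequence -/
noncomputable def limFun (g : ℕ → MvPowerSeries (Fin n) K) : MvPowerSeries (Fin n) K :=
  fun d => coeff d (g (deg d + 1))

lemma coeff_limFun (g : ℕ → MvPowerSeries (Fin n) K) (d : Fin n →₀ ℕ) :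
    coeff d (limFun g) = coeff d (g (deg d + 1)) := rfl

lemma telescope {g : ℕ → MvPowerSeries (Fin n) K}
    (hg : ∀ p, g (p + 1) - g p ∈ maxIdeal n K ^ (p + 1)) :
    ∀ p q, p ≤ q → g q - g p ∈ maxIdeal n K ^ (p + 1) := by
  intro p q hpq
  induction q, hpq using Nat.le_induction with
  | base => simp
  | succ q hpq ih =>
    have : g (q + 1) - g p = (g (q + 1) - g q) + (g q - g p) := by ring
    rw [this]
    exact Ideal.add_mem _ (pow_le_pow' (by omega) (hg q)) ih

lemma isLimit {g : ℕ → MvPowerSeries (Fin n) K}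
    (hg : ∀ p, g (p + 1) - g p ∈ maxIdeal n K ^ (p + 1)) :
    ∀ N, ∀ p ≥ N, g p - limFun g ∈ maxIdeal n K ^ N := by
  intro N p hp
  rw [mem_pow_iff]
  intro d hd
  rw [map_sub, coeff_limFun]
  have h1 : g p - g (deg d + 1) ∈ maxIdeal n K ^ (deg d + 2) := by
    rcases le_or_gt (deg d + 1) p with h | h
    · exact telescope hg _ _ h
    · have : p = deg d + 1 := by omega
      subst this; simp
  have := mem_pow_iff.1 h1 d (by omega)
  rw [map_sub] at this
  exact this

/-- local copy of MAdicTendsto -/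
def Tnd (g : ℕ → MvPowerSeries (Fin n) K) (l : MvPowerSeries (Fin n) K) : Prop :=
  ∀ N : ℕ, ∃ P : ℕ, ∀ p ≥ P, g p - l ∈ maxIdeal n K ^ N

lemma tnd_of_isLimit {g : ℕ → MvPowerSeries (Fin n) K}
    (hg : ∀ p, g (p + 1) - g p ∈ maxIdeal n K ^ (p + 1)) : Tnd g (limFun g) :=
  fun N => ⟨N, isLimit hg N⟩

lemma tnd_unique {g : ℕ → MvPowerSeries (Fin n) K} {l l' : MvPowerSeries (Fin n) K}
    (h : Tnd g l) (h' : Tnd g l') : l = l' := by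
  have : l - l' = 0 := by
    apply eq_zero_of_forall_mem
    intro N
    obtain ⟨P, hP⟩ := h N
    obtain ⟨P', hP'⟩ := h' N
    have e : l - l' = -(g (max P P') - l) + (g (max P P') - l') := by ring
    rw [e]
    exact Ideal.add_mem _ (neg_mem (hP _ (le_max_left _ _)))
      (hP' _ (le_max_right _ _))
  linear_combination this

lemma tnd_add {g g' : ℕ → MvPowerSeries (Fin n) K} {l l' : MvPowerSeries (Fin n) K}
    (h : Tnd g l) (h' : Tnd g' l') : Tnd (fun p => g p + g' p) (l + l') := by
  intro N
  obtain ⟨P, hP⟩ := h N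
  obtain ⟨P', hP'⟩ := h' N
  refine ⟨max P P', fun p hp => ?_⟩
  have e : g p + g' p - (l + l') = (g p - l) + (g' p - l') := by ring
  rw [e]
  exact Ideal.add_mem _ (hP p (le_of_max_le_left hp)) (hP' p (le_of_max_le_right hp))

lemma tnd_mul {g g' : ℕ → MvPowerSeries (Fin n) K} {l l' : MvPowerSeries (Fin n) K}
    (h : Tnd g l) (h' : Tnd g' l') : Tnd (fun p => g p * g' p) (l * l') := by
  intro N
  obtain ⟨P, hP⟩ := h N
  obtain ⟨P', hP'⟩ := h' N
  refine ⟨max P P', fun p hp => ?_⟩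
  have e : g p * g' p - l * l' = g p * (g' p - l') + (g p - l) * l' := by ring
  rw [e]
  exact Ideal.add_mem _ (Ideal.mul_mem_left _ _ (hP' p (le_of_max_le_right hp)))
    (Ideal.mul_mem_right _ _ (hP p (le_of_max_le_left hp)))

lemma tnd_const {g : ℕ → MvPowerSeries (Fin n) K} {c : MvPowerSeries (Fin n) K}
    {P : ℕ} (h : ∀ p ≥ P, g p = c) : Tnd g c := by
  intro N
  exact ⟨P, fun p hp => by rw [h p hp]; simp⟩

lemma tnd_congr {g g' : ℕ → MvPowerSeries (Fin n) K} {l : MvPowerSeries (Fin n) K}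
    (hgg' : ∀ p, g p - g' p ∈ maxIdeal n K ^ (p + 1)) (h : Tnd g l) : Tnd g' l := by
  intro N
  obtain ⟨P, hP⟩ := h N
  refine ⟨max P N, fun p hp => ?_⟩
  have e : g' p - l = -(g p - g' p) + (g p - l) := by ring
  rw [e]
  have hN : N ≤ p := le_of_max_le_right hp
  exact Ideal.add_mem _ (neg_mem (pow_le_pow' (by omega) (hgg' p)))
    (hP p (le_of_max_le_left hp))

/-! ### Local endomorphisms move elements by small amounts -/

lemma map_mem_pow {φ' : MvPowerSeries (Fin n) K →ₐ[K] MvPowerSeries (Fin n) K}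
    (hloc : ∀ g ∈ maxIdeal n K, φ' g ∈ maxIdeal n K) {k : ℕ} {g : MvPowerSeries (Fin n) K}
    (hg : g ∈ maxIdeal n K ^ k) : φ' g ∈ maxIdeal n K ^ k := by
  have h1 : Ideal.map φ'.toRingHom (maxIdeal n K) ≤ maxIdeal n K :=
    Ideal.map_le_iff_le_comap.2 fun x hx => hloc x hx
  have h2 : Ideal.map φ'.toRingHom (maxIdeal n K ^ k) ≤ maxIdeal n K ^ k := by
    rw [Ideal.map_pow]
    exact pow_le_pow_left' h1 k
  exact h2 (Ideal.mem_map_of_mem _ hg)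

lemma delta (φ' : MvPowerSeries (Fin n) K →ₐ[K] MvPowerSeries (Fin n) K)
    (hloc : ∀ g ∈ maxIdeal n K, φ' g ∈ maxIdeal n K)
    (b' : Fin n → MvPowerSeries (Fin n) K) (N : ℕ)
    (hb' : ∀ i, b' i ∈ maxIdeal n K ^ N)
    (hX : ∀ i, φ' (X i) = X i + b' i)
    (g : MvPowerSeries (Fin n) K) : φ' g - g ∈ maxIdeal n K ^ N := by
  suffices h : ∀ k, k ≤ N → ∀ g, φ' g - g ∈ maxIdeal n K ^ k from h N le_rfl g
  intro k hk
  induction k with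
  | zero => intro g; simp
  | succ k ih =>
    intro g
    have hC : φ' (C (constantCoeff g)) =
        C (constantCoeff g) := by
      rw [c_eq_algebraMap]
      exact φ'.commutes _
    have e : φ' g - g = ∑ i, (φ' (X i * Dcomp g i) - X i * Dcomp g i) := by
      conv_lhs => rw [decomp_eq g]
      rw [map_add, map_sum, hC, Finset.sum_sub_distrib]
      ring
    rw [e]
    apply Ideal.sum_mem
    intro i _
    rw [map_mul, hX i]
    have e2 : (X i + b' i) * φ' (Dcomp g i) - X i * Dcomp g i
        = X i * (φ' (Dcomp g i) - Dcomp g i) + b' i * φ' (Dcomp g i) := by ring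
    rw [e2]
    refine Ideal.add_mem _ ?_ ?_
    · rw [pow_succ']
      exact Ideal.mul_mem_mul (X_mem_maxIdeal i) (ih (by omega) _)
    · exact pow_le_pow' (by omega) (Ideal.mul_mem_right _ _ (hb' i))

/-! ### Substitution -/

open MvPolynomial in
open Classical in
/-- truncation of a power series below total degree `N`, as a polynomial -/
noncomputable def trunc' (N : ℕ) (g : MvPowerSeries (Fin n) K) : MvPolynomial (Fin n) K :=
  ∑ d ∈ (Finset.Iic (Finsupp.equivFunOnFinite.symm fun _ => N)).filter (fun d => deg d < N),
    MvPolynomial.monomial d (coeff d g)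

open MvPolynomial in
lemma coeff_trunc' (N : ℕ) (g : MvPowerSeries (Fin n) K) (e : Fin n →₀ ℕ) :
    MvPolynomial.coeff e (trunc' N g) = if deg e < N then coeff e g else 0 := by
  classical
  rw [trunc', MvPolynomial.coeff_sum]
  simp only [MvPolynomial.coeff_monomial]
  rw [Finset.sum_ite_eq' _ e (fun d => coeff d g)]
  congr 1
  simp only [Finset.mem_filter, Finset.mem_Iic, eq_iff_iff]
  constructor
  · rintro ⟨_, h⟩; exact h
  · intro h
    refine ⟨?_, h⟩
    rw [Finsupp.le_def]
    intro i
    have := le_deg e i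
    simp only [Finsupp.equivFunOnFinite_symm_apply_apply]
    omega

lemma sub_trunc'_mem (N : ℕ) (g : MvPowerSeries (Fin n) K) :
    g - ↑(trunc' N g) ∈ maxIdeal n K ^ N := by
  rw [mem_pow_iff]
  intro d hd
  rw [map_sub, MvPolynomial.coeff_coe, coeff_trunc', if_pos hd, sub_self]

lemma support_trunc' {N : ℕ} {g : MvPowerSeries (Fin n) K} {d : Fin n →₀ ℕ}
    (hd : d ∈ (trunc' N g).support) : deg d < N ∧ coeff d g ≠ 0 := by
  rw [MvPolynomial.mem_support_iff, coeff_trunc'] at hd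
  split at hd
  · exact ⟨by assumption, hd⟩
  · exact absurd rfl hd

variable {a : Fin n → MvPowerSeries (Fin n) K}

lemma prod_pow_mem (ha : ∀ i, a i ∈ maxIdeal n K) (s : Finset (Fin n)) (d : Fin n → ℕ) :
    (∏ i ∈ s, a i ^ d i) ∈ maxIdeal n K ^ (∑ i ∈ s, d i) := by
  classical
  induction s using Finset.induction_on with
  | empty => simp [Ideal.one_eq_top]
  | @insert j s hj ih =>
    rw [Finset.prod_insert hj, Finset.sum_insert hj, pow_add]
    exact Ideal.mul_mem_mul (Ideal.pow_mem_pow (ha j) _) ih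

lemma aeval_mem (ha : ∀ i, a i ∈ maxIdeal n K) (q : MvPolynomial (Fin n) K) (N : ℕ)
    (hq : ∀ d ∈ q.support, N ≤ deg d) : MvPolynomial.aeval a q ∈ maxIdeal n K ^ N := by
  rw [show (MvPolynomial.aeval a) q
      = ∑ d ∈ q.support, (MvPolynomial.aeval a) (MvPolynomial.monomial d (MvPolynomial.coeff d q))
    from by rw [← map_sum]; exact congrArg _ q.as_sum]
  apply Ideal.sum_mem
  intro d hd
  rw [MvPolynomial.aeval_monomial]
  apply Ideal.mul_mem_left
  have h1 : (d.prod fun i k => a i ^ k) = ∏ i ∈ d.support, a i ^ d i := rfl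
  have h2 : deg d = ∑ i ∈ d.support, d i := by
    rw [deg]
    symm
    apply Finset.sum_subset (Finset.subset_univ _)
    intro i _ hi
    rw [Finsupp.notMem_support_iff] at hi
    exact hi
  have := prod_pow_mem ha d.support d
  rw [← h2] at this
  rw [h1]
  exact pow_le_pow' (hq d hd) this

/-- the partial-evaluation sequence for substitution -/
noncomputable def sSeq (a : Fin n → MvPowerSeries (Fin n) K) (g : MvPowerSeries (Fin n) K)
    (p : ℕ) : MvPowerSeries (Fin n) K :=
  MvPolynomial.aeval a (trunc' (p + 1) g)

lemma cauchy_sSeq (ha : ∀ i, a i ∈ maxIdeal n K) (g : MvPowerSeries (Fin n) K) (p : ℕ) :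
    sSeq a g (p + 1) - sSeq a g p ∈ maxIdeal n K ^ (p + 1) := by
  rw [sSeq, sSeq, ← map_sub]
  apply aeval_mem ha
  intro d hd
  rw [MvPolynomial.mem_support_iff, MvPolynomial.coeff_sub, coeff_trunc', coeff_trunc'] at hd
  by_contra hlt
  push_neg at hlt
  rw [if_pos (by omega), if_pos (by omega), sub_self] at hd
  exact hd rfl

/-- The substitution map `g ↦ g(a)`. -/
noncomputable def Ssub (a : Fin n → MvPowerSeries (Fin n) K) (g : MvPowerSeries (Fin n) K) :
    MvPowerSeries (Fin n) K :=
  limFun (sSeq a g)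

lemma tnd_Ssub (ha : ∀ i, a i ∈ maxIdeal n K) (g : MvPowerSeries (Fin n) K) :
    Tnd (sSeq a g) (Ssub a g) :=
  tnd_of_isLimit (cauchy_sSeq ha g)

lemma isLimit_Ssub (ha : ∀ i, a i ∈ maxIdeal n K) (g : MvPowerSeries (Fin n) K) :
    ∀ N, ∀ p ≥ N, sSeq a g p - Ssub a g ∈ maxIdeal n K ^ N :=
  isLimit (cauchy_sSeq ha g)

lemma trunc'_coe (q : MvPolynomial (Fin n) K) {N : ℕ}
    (hq : ∀ d ∈ q.support, deg d < N) : trunc' N (↑q) = q := by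
  apply MvPolynomial.ext
  intro e
  rw [coeff_trunc', MvPolynomial.coeff_coe]
  split
  · rfl
  · rename_i h
    by_contra hne
    exact h (hq e (MvPolynomial.mem_support_iff.2 fun h' => hne h'.symm))

lemma Ssub_poly (ha : ∀ i, a i ∈ maxIdeal n K) (q : MvPolynomial (Fin n) K) :
    Ssub a (↑q) = MvPolynomial.aeval a q := by
  apply tnd_unique (tnd_Ssub ha _)
  apply tnd_const (P := q.support.sup deg)
  intro p hp
  rw [sSeq, trunc'_coe]
  intro d hd
  have := Finset.le_sup (f := deg) hd
  omega

lemma trunc'_add (N : ℕ) (g h : MvPowerSeries (Fin n) K) :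
    trunc' N (g + h) = trunc' N g + trunc' N h := by
  apply MvPolynomial.ext
  intro e
  rw [MvPolynomial.coeff_add, coeff_trunc', coeff_trunc', coeff_trunc', map_add]
  split <;> simp

lemma Ssub_add (ha : ∀ i, a i ∈ maxIdeal n K) (g h : MvPowerSeries (Fin n) K) :
    Ssub a (g + h) = Ssub a g + Ssub a h := by
  apply tnd_unique (tnd_Ssub ha _)
  have : (fun p => sSeq a g p + sSeq a h p) = sSeq a (g + h) := by
    funext p
    rw [sSeq, sSeq, sSeq, trunc'_add, map_add]
  rw [← this]
  exact tnd_add (tnd_Ssub ha g) (tnd_Ssub ha h)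

lemma sSeq_mul_key (ha : ∀ i, a i ∈ maxIdeal n K) (g h : MvPowerSeries (Fin n) K) (p : ℕ) :
    sSeq a g p * sSeq a h p - sSeq a (g * h) p ∈ maxIdeal n K ^ (p + 1) := by
  classical
  rw [sSeq, sSeq, sSeq, ← map_mul, ← map_sub]
  apply aeval_mem ha
  intro d hd
  by_contra hlt
  push_neg at hlt
  rw [MvPolynomial.mem_support_iff] at hd
  apply hd
  rw [MvPolynomial.coeff_sub, MvPolynomial.coeff_mul, coeff_trunc', if_pos (by omega),
    MvPowerSeries.coeff_mul]
  rw [sub_eq_zero]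
  apply Finset.sum_congr rfl
  rintro ⟨d1, d2⟩ hmem
  rw [Finset.HasAntidiagonal.mem_antidiagonal] at hmem
  dsimp only
  have hdd : deg d1 + deg d2 = deg d := by rw [← deg_add, hmem]
  rw [coeff_trunc', coeff_trunc', if_pos (by omega), if_pos (by omega)]

lemma Ssub_mul (ha : ∀ i, a i ∈ maxIdeal n K) (g h : MvPowerSeries (Fin n) K) :
    Ssub a (g * h) = Ssub a g * Ssub a h := by
  apply tnd_unique (tnd_Ssub ha _)
  exact tnd_congr (fun p => sSeq_mul_key ha g h p)
    (tnd_mul (tnd_Ssub ha g) (tnd_Ssub ha h))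

/-- substitution as an algebra homomorphism -/
noncomputable def Shom (a : Fin n → MvPowerSeries (Fin n) K)
    (ha : ∀ i, a i ∈ maxIdeal n K) :
    MvPowerSeries (Fin n) K →ₐ[K] MvPowerSeries (Fin n) K where
  toFun := Ssub a
  map_one' := by
    show Ssub a 1 = 1
    rw [← MvPolynomial.coe_one, Ssub_poly ha]
    simp
  map_mul' := Ssub_mul ha
  map_zero' := by
    show Ssub a 0 = 0
    rw [show ((0 : MvPowerSeries (Fin n) K))
        = ((0 : MvPolynomial (Fin n) K) : MvPowerSeries (Fin n) K) from by simp,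
      Ssub_poly ha]
    simp
  map_add' := Ssub_add ha
  commutes' := by
    intro c
    show Ssub a (algebraMap K (MvPowerSeries (Fin n) K) c)
        = algebraMap K (MvPowerSeries (Fin n) K) c
    rw [← MvPowerSeries.c_eq_algebraMap, ← MvPolynomial.coe_C, Ssub_poly ha,
      MvPolynomial.aeval_C]
    rw [MvPolynomial.coe_C, MvPowerSeries.c_eq_algebraMap]

lemma Shom_X (ha : ∀ i, a i ∈ maxIdeal n K) (i : Fin n) :
    Shom a ha (X i) = a i := by
  show Ssub a (X i) = a i
  rw [← MvPolynomial.coe_X, Ssub_poly ha, MvPolynomial.aeval_X]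

/-! ### The shift estimate for substitutions near the identity -/

variable {Mb : ℕ}

lemma powDiff (ha : ∀ i, a i ∈ maxIdeal n K)
    (hb : ∀ i, a i - X i ∈ maxIdeal n K ^ (Mb + 1)) (i : Fin n) (e : ℕ) :
    a i ^ e - X i ^ e ∈ maxIdeal n K ^ (e + Mb) := by
  induction e with
  | zero => simp
  | succ e ih =>
    have key : a i ^ (e + 1) - X i ^ (e + 1)
        = a i * (a i ^ e - X i ^ e) + (a i - X i) * X i ^ e := by ring
    rw [key]
    refine Ideal.add_mem _ ?_ ?_
    · have : maxIdeal n K * maxIdeal n K ^ (e + Mb) = maxIdeal n K ^ (e + 1 + Mb) := by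
        rw [← pow_succ']; ring_nf
      rw [← this]
      exact Ideal.mul_mem_mul (ha i) ih
    · have h2 := Ideal.mul_mem_mul (hb i) (Ideal.pow_mem_pow (X_mem_maxIdeal i) e)
      rw [← pow_add] at h2
      exact pow_le_pow' (by omega) h2

lemma prodDiff (ha : ∀ i, a i ∈ maxIdeal n K)
    (hb : ∀ i, a i - X i ∈ maxIdeal n K ^ (Mb + 1)) (s : Finset (Fin n)) (d : Fin n → ℕ) :
    (∏ i ∈ s, a i ^ d i) - (∏ i ∈ s, X i ^ d i) ∈ maxIdeal n K ^ ((∑ i ∈ s, d i) + Mb) := by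
  classical
  induction s using Finset.induction_on with
  | empty => simp
  | @insert j s hj ih =>
    rw [Finset.prod_insert hj, Finset.prod_insert hj, Finset.sum_insert hj]
    have key : a j ^ d j * ∏ i ∈ s, a i ^ d i - X j ^ d j * ∏ i ∈ s, X i ^ d i
        = a j ^ d j * ((∏ i ∈ s, a i ^ d i) - ∏ i ∈ s, X i ^ d i)
          + (a j ^ d j - X j ^ d j) * ∏ i ∈ s, X i ^ d i := by ring
    rw [key]
    refine Ideal.add_mem _ ?_ ?_
    · have h2 := Ideal.mul_mem_mul (Ideal.pow_mem_pow (ha j) (d j)) ih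
      rw [← pow_add] at h2
      exact pow_le_pow' (by omega) h2
    · have h2 := Ideal.mul_mem_mul (powDiff ha hb j (d j))
        (prod_pow_mem (fun i => X_mem_maxIdeal i) s d)
      rw [← pow_add] at h2
      exact pow_le_pow' (by omega) h2

lemma coe_eq_aevalX (q : MvPolynomial (Fin n) K) :
    (↑q : MvPowerSeries (Fin n) K)
      = MvPolynomial.aeval (fun i => (X i : MvPowerSeries (Fin n) K)) q := by
  induction q using MvPolynomial.induction_on with
  | C c =>
    rw [MvPolynomial.coe_C, MvPolynomial.aeval_C, MvPowerSeries.c_eq_algebraMap]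
  | add p q hp hq => rw [MvPolynomial.coe_add, map_add, hp, hq]
  | mul_X p i hp => rw [MvPolynomial.coe_mul, map_mul, hp, MvPolynomial.coe_X, MvPolynomial.aeval_X]

lemma polyDiff (ha : ∀ i, a i ∈ maxIdeal n K)
    (hb : ∀ i, a i - X i ∈ maxIdeal n K ^ (Mb + 1)) (q : MvPolynomial (Fin n) K) (k : ℕ)
    (hq : ∀ d ∈ q.support, k ≤ deg d) :
    MvPolynomial.aeval a q - ↑q ∈ maxIdeal n K ^ (k + Mb) := by
  rw [coe_eq_aevalX]
  rw [show (MvPolynomial.aeval a) q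
      = ∑ d ∈ q.support, (MvPolynomial.aeval a) (MvPolynomial.monomial d (MvPolynomial.coeff d q))
    from by rw [← map_sum]; exact congrArg _ q.as_sum]
  rw [show (MvPolynomial.aeval fun i => (X i : MvPowerSeries (Fin n) K)) q
      = ∑ d ∈ q.support, (MvPolynomial.aeval fun i => (X i : MvPowerSeries (Fin n) K))
          (MvPolynomial.monomial d (MvPolynomial.coeff d q))
    from by rw [← map_sum]; exact congrArg _ q.as_sum]
  rw [← Finset.sum_sub_distrib]
  apply Ideal.sum_mem
  intro d hd
  rw [MvPolynomial.aeval_monomial, MvPolynomial.aeval_monomial, ← mul_sub]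
  apply Ideal.mul_mem_left
  have h2 : deg d = ∑ i ∈ d.support, d i := by
    rw [deg]
    symm
    apply Finset.sum_subset (Finset.subset_univ _)
    intro i _ hi
    rw [Finsupp.notMem_support_iff] at hi
    exact hi
  have h3 := prodDiff ha hb d.support d
  rw [← h2] at h3
  exact pow_le_pow' (by have := hq d hd; omega) h3

lemma shift (ha : ∀ i, a i ∈ maxIdeal n K)
    (hb : ∀ i, a i - X i ∈ maxIdeal n K ^ (Mb + 1)) (k : ℕ) {g : MvPowerSeries (Fin n) K}
    (hg : g ∈ maxIdeal n K ^ k) : Ssub a g - g ∈ maxIdeal n K ^ (k + Mb) := by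
  set p := k + Mb with hp
  set t := trunc' (p + 1) g with ht
  have key : Ssub a g - g = -(sSeq a g p - Ssub a g) + (MvPolynomial.aeval a t - ↑t)
      + -(g - ↑t) := by
    rw [sSeq]
    ring
  rw [key]
  refine Ideal.add_mem _ (Ideal.add_mem _ (neg_mem ?_) ?_) (neg_mem ?_)
  · exact isLimit_Ssub ha g p p le_rfl
  · apply polyDiff ha hb
    intro d hd
    obtain ⟨_, hne⟩ := support_trunc' hd
    by_contra hlt
    exact hne (mem_pow_iff.1 hg d (by omega))
  · exact pow_le_pow' (by omega) (sub_trunc'_mem (p + 1) g)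

lemma Ssub_mem_maxIdeal (ha : ∀ i, a i ∈ maxIdeal n K)
    (hb : ∀ i, a i - X i ∈ maxIdeal n K ^ (Mb + 1)) {g : MvPowerSeries (Fin n) K}
    (hg : g ∈ maxIdeal n K) : Ssub a g ∈ maxIdeal n K := by
  have h1 : g ∈ maxIdeal n K ^ 1 := by rwa [pow_one]
  have h2 := shift ha hb 1 h1
  have e : Ssub a g = (Ssub a g - g) + g := by ring
  rw [e]
  have h3 : Ssub a g - g ∈ maxIdeal n K ^ 1 := pow_le_pow' (by omega) h2
  rw [pow_one] at h3
  exact Ideal.add_mem _ h3 hg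

/-! ### Bijectivity -/

lemma Ssub_inj (ha : ∀ i, a i ∈ maxIdeal n K)
    (hb : ∀ i, a i - X i ∈ maxIdeal n K ^ (Mb + 1)) (hMb : 1 ≤ Mb)
    {g : MvPowerSeries (Fin n) K} (h : Ssub a g = 0) : g = 0 := by
  apply eq_zero_of_forall_mem
  have key : ∀ k, g ∈ maxIdeal n K ^ k := by
    intro k
    induction k with
    | zero => simp
    | succ k ih =>
      have h2 := shift ha hb k ih
      rw [h] at h2
      have e : g = -(0 - g) := by ring
      rw [e]
      exact pow_le_pow' (by omega) (neg_mem h2)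
  exact key

lemma Ssub_surj (ha : ∀ i, a i ∈ maxIdeal n K)
    (hb : ∀ i, a i - X i ∈ maxIdeal n K ^ (Mb + 1)) (hMb : 1 ≤ Mb)
    (h : MvPowerSeries (Fin n) K) : ∃ g, Ssub a g = h := by
  set r : ℕ → MvPowerSeries (Fin n) K :=
    fun q => Nat.rec h (fun _ rq => rq - (Ssub a rq - h)) q with hr
  have hrs : ∀ q, r (q + 1) = r q - (Ssub a (r q) - h) := fun q => rfl
  have he : ∀ q, Ssub a (r q) - h ∈ maxIdeal n K ^ (q + 1) := by
    intro q
    induction q with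
    | zero =>
      have h2 := shift ha hb 0 (g := h) (by simp)
      exact pow_le_pow' (by omega) h2
    | succ q ih =>
      rw [hrs q]
      have hsub : Ssub a (r q - (Ssub a (r q) - h))
          = Ssub a (r q) - Ssub a (Ssub a (r q) - h) := map_sub (Shom a ha) _ _
      rw [hsub]
      have h2 := shift ha hb (q + 1) ih
      have e : Ssub a (r q) - Ssub a (Ssub a (r q) - h) - h
          = -(Ssub a (Ssub a (r q) - h) - (Ssub a (r q) - h)) := by ring
      rw [e]
      exact pow_le_pow' (by omega) (neg_mem h2)
  have hcauchy : ∀ q, r (q + 1) - r q ∈ maxIdeal n K ^ (q + 1) := by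
    intro q
    rw [hrs q]
    have e : r q - (Ssub a (r q) - h) - r q = -(Ssub a (r q) - h) := by ring
    rw [e]
    exact neg_mem (he q)
  refine ⟨limFun r, ?_⟩
  have hL := isLimit hcauchy
  have : Ssub a (limFun r) - h = 0 := by
    apply eq_zero_of_forall_mem
    intro N
    have hsub2 : Ssub a (limFun r - r N) = Ssub a (limFun r) - Ssub a (r N) :=
      map_sub (Shom a ha) _ _
    have e : Ssub a (limFun r) - h
        = Ssub a (limFun r - r N) + (Ssub a (r N) - h) := by
      rw [hsub2]
      ring
    rw [e]
    refine Ideal.add_mem _ ?_ (pow_le_pow' (by omega) (he N))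
    have hm : limFun r - r N ∈ maxIdeal n K ^ N := by
      have := hL N N le_rfl
      have e2 : limFun r - r N = -(r N - limFun r) := by ring
      rw [e2]
      exact neg_mem this
    have h2 := shift ha hb N hm
    have e3 : Ssub a (limFun r - r N)
        = (Ssub a (limFun r - r N) - (limFun r - r N)) + (limFun r - r N) := by ring
    rw [e3]
    exact Ideal.add_mem _ (pow_le_pow' (by omega) h2) hm
  linear_combination this

/-- the substitution automorphism -/
noncomputable def SEquiv (a : Fin n → MvPowerSeries (Fin n) K)
    (ha : ∀ i, a i ∈ maxIdeal n K)
    (hb : ∀ i, a i - X i ∈ maxIdeal n K ^ (Mb + 1)) (hMb : 1 ≤ Mb) :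
    MvPowerSeries (Fin n) K ≃ₐ[K] MvPowerSeries (Fin n) K :=
  AlgEquiv.ofBijective (Shom a ha)
    ⟨(injective_iff_map_eq_zero (Shom a ha)).2 fun g hg => Ssub_inj ha hb hMb hg,
     Ssub_surj ha hb hMb⟩

lemma SEquiv_apply (ha : ∀ i, a i ∈ maxIdeal n K)
    (hb : ∀ i, a i - X i ∈ maxIdeal n K ^ (Mb + 1)) (hMb : 1 ≤ Mb)
    (g : MvPowerSeries (Fin n) K) : SEquiv a ha hb hMb g = Ssub a g := rfl

end CL


/-- convergence lemma, parts (1) and (2):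
Given `b_{p,0} ∈ m^{M+p-1}`, `b_{p,i} ∈ m^{M+p}`, the local substitution
endomorphisms `φ_p : x_i ↦ x_i + b_{p,i}`, the compositions
`Φ_p = φ_p ∘ ⋯ ∘ φ_1`, and the units `u_p = (1 + b_{p,0})·φ_p(u_{p-1})`
with `u_0 = 1`, then:
(1) each sequence `(Φ_p(x_i))_p` converges `m`-adically to some `x_i + b_i`
with `b_i ∈ m^{M+1}`, and the substitution `x_i ↦ x_i + b_i` is a local
`K`-algebra automorphism;
(2) the sequence `(u_p)_p` converges `m`-adically to a unit `1 + b_0` with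
`b_0 ∈ m^M`. -/

theorem convergence_lemma
    {n : ℕ} {K : Type} [Field K] (M : ℕ) (hM : 1 ≤ M)
    (b0 : ℕ → MvPowerSeries (Fin n) K)
    (hb0 : ∀ p, 1 ≤ p → b0 p ∈ maxIdeal n K ^ (M + p - 1))
    (b : ℕ → Fin n → MvPowerSeries (Fin n) K)
    (hb : ∀ p, 1 ≤ p → ∀ i, b p i ∈ maxIdeal n K ^ (M + p))
    (φ : ℕ → (MvPowerSeries (Fin n) K →ₐ[K] MvPowerSeries (Fin n) K))
    (hφloc : ∀ p, ∀ g ∈ maxIdeal n K, φ p g ∈ maxIdeal n K)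
    (hφX : ∀ p, 1 ≤ p → ∀ i,
      φ p (MvPowerSeries.X i) = MvPowerSeries.X i + b p i)
    (Φ : ℕ → (MvPowerSeries (Fin n) K →ₐ[K] MvPowerSeries (Fin n) K))
    (hΦ0 : Φ 0 = AlgHom.id K (MvPowerSeries (Fin n) K))
    (hΦ : ∀ p, Φ (p + 1) = (φ (p + 1)).comp (Φ p))
    (u : ℕ → MvPowerSeries (Fin n) K)
    (hu0 : u 0 = 1)
    (hu : ∀ p, u (p + 1) = (1 + b0 (p + 1)) * φ (p + 1) (u p)) :
    (∃ blim : Fin n → MvPowerSeries (Fin n) K,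
      (∀ i, blim i ∈ maxIdeal n K ^ (M + 1)) ∧
      (∀ i, MAdicTendsto (fun p => Φ p (MvPowerSeries.X i))
        (MvPowerSeries.X i + blim i)) ∧
      ∃ ψ : MvPowerSeries (Fin n) K ≃ₐ[K] MvPowerSeries (Fin n) K,
        (∀ g ∈ maxIdeal n K, ψ g ∈ maxIdeal n K) ∧
        ∀ i, ψ (MvPowerSeries.X i) = MvPowerSeries.X i + blim i) ∧
    (∃ b0lim : MvPowerSeries (Fin n) K,
      b0lim ∈ maxIdeal n K ^ M ∧
      MAdicTendsto u (1 + b0lim) ∧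
      IsUnit (1 + b0lim)) := by
  classical
  -- the key Cauchy estimates
  have hdiffM : ∀ (i : Fin n) (p : ℕ),
      Φ (p + 1) (MvPowerSeries.X i) - Φ p (MvPowerSeries.X i)
        ∈ maxIdeal n K ^ (M + p + 1) := by
    intro i p
    have e : Φ (p + 1) (MvPowerSeries.X i) = φ (p + 1) (Φ p (MvPowerSeries.X i)) := by
      rw [hΦ p]; rfl
    rw [e]
    have := CL.delta (φ (p + 1)) (hφloc (p + 1)) (b (p + 1)) (M + p + 1)
      (by
        have h' := hb (p + 1) (by omega)
        intro j
        have e2 : M + (p + 1) = M + p + 1 := by omega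
        rw [e2] at h'
        exact h' j)
      (hφX (p + 1) (by omega)) (Φ p (MvPowerSeries.X i))
    exact this
  have hdiff : ∀ (i : Fin n) (p : ℕ),
      Φ (p + 1) (MvPowerSeries.X i) - Φ p (MvPowerSeries.X i)
        ∈ maxIdeal n K ^ (p + 1) := fun i p =>
    CL.pow_le_pow' (by omega) (hdiffM i p)
  -- the limits of Φ_p(X i)
  set L : Fin n → MvPowerSeries (Fin n) K :=
    fun i => CL.limFun (fun p => Φ p (MvPowerSeries.X i)) with hL
  have hLim : ∀ (i : Fin n) (N : ℕ), ∀ p ≥ N,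
      Φ p (MvPowerSeries.X i) - L i ∈ maxIdeal n K ^ N := fun i =>
    CL.isLimit (hdiff i)
  have hΦX1 : ∀ (i : Fin n) (p : ℕ),
      Φ p (MvPowerSeries.X i) - MvPowerSeries.X i ∈ maxIdeal n K ^ (M + 1) := by
    intro i p
    induction p with
    | zero => rw [hΦ0]; simp
    | succ p ih =>
      have e : Φ (p + 1) (MvPowerSeries.X i) - MvPowerSeries.X i
          = (Φ (p + 1) (MvPowerSeries.X i) - Φ p (MvPowerSeries.X i))
            + (Φ p (MvPowerSeries.X i) - MvPowerSeries.X i) := by ring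
      rw [e]
      exact Ideal.add_mem _ (CL.pow_le_pow' (by omega) (hdiffM i p)) ih
  set blim : Fin n → MvPowerSeries (Fin n) K := fun i => L i - MvPowerSeries.X i with hblim
  have hXblim : ∀ i, MvPowerSeries.X i + blim i = L i := by
    intro i; rw [hblim]; ring
  have hblimmem : ∀ i, blim i ∈ maxIdeal n K ^ (M + 1) := by
    intro i
    have e : blim i = -(Φ (M + 1) (MvPowerSeries.X i) - L i)
        + (Φ (M + 1) (MvPowerSeries.X i) - MvPowerSeries.X i) := by rw [hblim]; ring
    rw [e]
    exact Ideal.add_mem _ (neg_mem (hLim i (M + 1) (M + 1) le_rfl)) (hΦX1 i (M + 1))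
  -- the substitution data
  set a : Fin n → MvPowerSeries (Fin n) K := fun i => MvPowerSeries.X i + blim i with ha'
  have haX : ∀ i, a i - MvPowerSeries.X i ∈ maxIdeal n K ^ (M + 1) := by
    intro i
    have e : a i - MvPowerSeries.X i = blim i := by rw [ha']; ring
    rw [e]; exact hblimmem i
  have ham : ∀ i, a i ∈ maxIdeal n K := by
    intro i
    have h1 : blim i ∈ maxIdeal n K := by
      have := CL.pow_le_pow' (show 1 ≤ M + 1 by omega) (hblimmem i)
      rwa [pow_one] at this
    exact Ideal.add_mem _ (CL.X_mem_maxIdeal i) h1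
  refine ⟨⟨blim, hblimmem, ?_, ?_⟩, ?_⟩
  · -- convergence of Φ_p(X i)
    intro i N
    refine ⟨N, fun p hp => ?_⟩
    rw [hXblim i]
    exact hLim i N p hp
  · -- the automorphism
    refine ⟨CL.SEquiv a ham haX hM, ?_, ?_⟩
    · intro g hg
      rw [CL.SEquiv_apply]
      exact CL.Ssub_mem_maxIdeal ham haX hg
    · intro i
      rw [CL.SEquiv_apply]
      exact CL.Shom_X ham i
  · -- part (2): the units
    have hudM : ∀ p, u (p + 1) - u p ∈ maxIdeal n K ^ (M + p) := by
      intro p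
      have e : u (p + 1) - u p
          = (φ (p + 1) (u p) - u p) + b0 (p + 1) * φ (p + 1) (u p) := by
        rw [hu p]; ring
      rw [e]
      refine Ideal.add_mem _ ?_ ?_
      · refine CL.pow_le_pow' (show M + p ≤ M + p + 1 by omega) ?_
        exact CL.delta (φ (p + 1)) (hφloc (p + 1)) (b (p + 1)) (M + p + 1)
          (by
            have h' := hb (p + 1) (by omega)
            intro j
            have e2 : M + (p + 1) = M + p + 1 := by omega
            rw [e2] at h'
            exact h' j)
          (hφX (p + 1) (by omega)) (u p)
      · have h' := hb0 (p + 1) (by omega)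
        have e2 : M + (p + 1) - 1 = M + p := by omega
        rw [e2] at h'
        exact Ideal.mul_mem_right _ _ h'
    have hud : ∀ p, u (p + 1) - u p ∈ maxIdeal n K ^ (p + 1) := fun p =>
      CL.pow_le_pow' (by omega) (hudM p)
    set U : MvPowerSeries (Fin n) K := CL.limFun u with hU'
    have hUlim : ∀ N, ∀ p ≥ N, u p - U ∈ maxIdeal n K ^ N := CL.isLimit hud
    have hu1 : ∀ p, u p - 1 ∈ maxIdeal n K ^ M := by
      intro p
      induction p with
      | zero => rw [hu0]; simp
      | succ p ih =>
        have e : u (p + 1) - 1 = (u (p + 1) - u p) + (u p - 1) := by ring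
        rw [e]
        exact Ideal.add_mem _ (CL.pow_le_pow' (by omega) (hudM p)) ih
    refine ⟨U - 1, ?_, ?_, ?_⟩
    · have e : U - 1 = -(u M - U) + (u M - 1) := by ring
      rw [e]
      exact Ideal.add_mem _ (neg_mem (hUlim M M le_rfl)) (hu1 M)
    · intro N
      refine ⟨N, fun p hp => ?_⟩
      have e : u p - (1 + (U - 1)) = u p - U := by ring
      rw [e]
      exact hUlim N p hp
    · rw [MvPowerSeries.isUnit_iff_constantCoeff]
      have h0 : MvPowerSeries.constantCoeff (U - 1) = 0 := by
        have h1 : U - 1 ∈ maxIdeal n K ^ M := by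
          have e : U - 1 = -(u M - U) + (u M - 1) := by ring
          rw [e]
          exact Ideal.add_mem _ (neg_mem (hUlim M M le_rfl)) (hu1 M)
        have := CL.mem_pow_iff.1 h1 0 (by simp [CL.deg]; omega)
        rwa [MvPowerSeries.coeff_zero_eq_constantCoeff_apply] at this
      rw [map_add, h0, map_one, add_zero]
      exact isUnit_one
end

section
/- In the situation of the convergence lemma (M >= 1, b_{p,0} in m^{M+p-1}, b_{p,i} in m^{M+p}, phi_p the substitution x_i -> x_i + b_{p,i}, Phi_p = phi_p o ... o phi_1, u_p = (1 + b_{p,0}) * phi_p(u_{p-1}) with u_0 = 1, and with limits: the automorphism Phi given by x_i -> x_i + b_i = lim Phi_p(x_i) and the unit u = lim u_p): for every power series f_0 in K[[x_1,...,x_n]], the sequence (Phi_p(f_0))_{p>=1} converges in the m-adic topology to Phi(f_0), and the sequence (u_p * Phi_p(f_0))_{p>=1} converges in the m-adic topology to u * Phi(f_0). -/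
section Aux
variable {n : ℕ} {K : Type} [Field K]

lemma X_mem_maxIdeal (i : Fin n) :
    (MvPowerSeries.X i : MvPowerSeries (Fin n) K) ∈ maxIdeal n K :=
  Ideal.subset_span ⟨i, rfl⟩

lemma mem_pow_of_coeff_eq_zero :
    ∀ (N : ℕ) (f : MvPowerSeries (Fin n) K),
      (∀ d : Fin n →₀ ℕ, (d.sum fun _ k => k) < N → MvPowerSeries.coeff d f = 0) →
      f ∈ maxIdeal n K ^ N := by
  intro N
  induction N with
  | zero => intro f _; simp
  | succ N ih =>
    intro f hf
    classical
    set g : Fin n → MvPowerSeries (Fin n) K := fun i d =>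
      if ∀ j, j < i → d j = 0 then MvPowerSeries.coeff (d + Finsupp.single i 1) f else 0
      with hgdef
    have hgcoeff : ∀ (i : Fin n) (e : Fin n →₀ ℕ), MvPowerSeries.coeff e (g i)
        = if ∀ j, j < i → e j = 0 then MvPowerSeries.coeff (e + Finsupp.single i 1) f else 0 :=
      fun i e => rfl
    have hterm : ∀ (i : Fin n) (d : Fin n →₀ ℕ),
        MvPowerSeries.coeff d (MvPowerSeries.X i * g i)
          = if Finsupp.single i 1 ≤ d then MvPowerSeries.coeff (d - Finsupp.single i 1) (g i) else 0 := by
      intro i d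
      rw [MvPowerSeries.X_def, MvPowerSeries.coeff_monomial_mul]
      simp [MvPowerSeries.coeff_apply]
    have hfeq : f = ∑ i : Fin n, MvPowerSeries.X i * g i := by
      apply MvPowerSeries.ext
      intro d
      rw [map_sum]
      by_cases hd : d = 0
      · subst hd
        rw [hf 0 (by simp)]
        refine (Finset.sum_eq_zero ?_).symm
        intro i _
        rw [hterm, if_neg]
        simp [Finsupp.single_le_iff]
      · have hsupp : d.support.Nonempty := Finsupp.support_nonempty_iff.mpr hd
        set i₀ := d.support.min' hsupp with hi₀
        have hi₀mem : i₀ ∈ d.support := d.support.min'_mem hsupp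
        have hdi₀ : d i₀ ≠ 0 := Finsupp.mem_support_iff.mp hi₀mem
        have hmin : ∀ j, j < i₀ → d j = 0 := by
          intro j hj
          by_contra hcon
          exact absurd (d.support.min'_le j (Finsupp.mem_support_iff.mpr hcon)) (not_le.mpr hj)
        rw [Finset.sum_eq_single i₀]
        · rw [hterm]
          have hle : Finsupp.single i₀ 1 ≤ d := Finsupp.single_le_iff.mpr (Nat.one_le_iff_ne_zero.mpr hdi₀)
          rw [if_pos hle, hgcoeff, if_pos, tsub_add_cancel_of_le hle]
          intro j hj
          rw [Finsupp.tsub_apply, Finsupp.single_apply, if_neg (by exact fun h => absurd (h ▸ hj) (lt_irrefl _)), hmin j hj]; rfl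
        · intro i _ hne
          rw [hterm]
          by_cases hle : Finsupp.single i 1 ≤ d
          · rw [if_pos hle]
            have hdi : d i ≠ 0 := Nat.one_le_iff_ne_zero.mp (Finsupp.single_le_iff.mp hle)
            have hi₀lt : i₀ < i := by
              rcases lt_or_eq_of_le (d.support.min'_le i (Finsupp.mem_support_iff.mpr hdi)) with h | h
              · exact h
              · exact absurd h.symm hne
            rw [hgcoeff, if_neg]
            intro hall
            have := hall i₀ hi₀lt
            rw [Finsupp.tsub_apply, Finsupp.single_apply,
              if_neg (fun h => absurd (h ▸ hi₀lt) (lt_irrefl _))] at this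
            exact hdi₀ (by simpa using this)
          · exact if_neg hle
        · intro h; exact absurd (Finset.mem_univ i₀) h
    rw [hfeq, pow_succ']
    refine Submodule.sum_mem _ fun i _ => Ideal.mul_mem_mul (X_mem_maxIdeal i) (ih (g i) ?_)
    intro d hdeg
    rw [hgcoeff]
    split
    · apply hf
      rw [Finsupp.sum_add_index' (fun _ => rfl) (fun _ _ _ => rfl), Finsupp.sum_single_index rfl]
      omega
    · rfl

lemma apply_mem_pow (ψ : MvPowerSeries (Fin n) K →ₐ[K] MvPowerSeries (Fin n) K)
    (hψ : ∀ i, ψ (MvPowerSeries.X i) ∈ maxIdeal n K) {N : ℕ} {g : MvPowerSeries (Fin n) K}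
    (hg : g ∈ maxIdeal n K ^ N) : ψ g ∈ maxIdeal n K ^ N := by
  have h1 : Ideal.map (ψ : MvPowerSeries (Fin n) K →+* MvPowerSeries (Fin n) K) (maxIdeal n K)
      ≤ maxIdeal n K := by
    rw [Ideal.map_le_iff_le_comap, maxIdeal, Ideal.span_le]
    rintro x ⟨i, rfl⟩
    exact hψ i
  have h2 : ψ g ∈ Ideal.map (ψ : MvPowerSeries (Fin n) K →+* MvPowerSeries (Fin n) K)
      (maxIdeal n K ^ N) := Ideal.mem_map_of_mem _ hg
  rw [Ideal.map_pow] at h2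
  exact Ideal.pow_right_mono h1 N h2

end Aux

section Aux2
variable {n : ℕ} {K : Type} [Field K]

lemma hom_diff (ψ ψ' : MvPowerSeries (Fin n) K →ₐ[K] MvPowerSeries (Fin n) K)
    (hψ : ∀ i, ψ (MvPowerSeries.X i) ∈ maxIdeal n K)
    (hψ' : ∀ i, ψ' (MvPowerSeries.X i) ∈ maxIdeal n K) (N : ℕ)
    (h : ∀ i, ψ (MvPowerSeries.X i) - ψ' (MvPowerSeries.X i) ∈ maxIdeal n K ^ N)
    (f : MvPowerSeries (Fin n) K) : ψ f - ψ' f ∈ maxIdeal n K ^ N := by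
  classical
  set c : Fin n →₀ ℕ := Finsupp.equivFunOnFinite.symm (fun _ => N) with hc
  set T : MvPolynomial (Fin n) K :=
    ∑ d ∈ Finset.Iic c, MvPolynomial.monomial d (MvPowerSeries.coeff d f) with hT
  have hTcoeff : ∀ d : Fin n →₀ ℕ, MvPolynomial.coeff d T
      = if d ∈ Finset.Iic c then MvPowerSeries.coeff d f else 0 := by
    intro d
    rw [hT, MvPolynomial.coeff_sum]
    simp only [MvPolynomial.coeff_monomial]
    rw [Finset.sum_ite_eq' (Finset.Iic c) d (fun e => MvPowerSeries.coeff e f)]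
  have hresid : f - (T : MvPowerSeries (Fin n) K) ∈ maxIdeal n K ^ N := by
    apply mem_pow_of_coeff_eq_zero
    intro d hdeg
    have hdc : d ∈ Finset.Iic c := by
      rw [Finset.mem_Iic]
      intro i
      have : d i ≤ d.sum fun _ k => k := by
        by_cases hi : i ∈ d.support
        · exact Finset.single_le_sum (f := fun j => d j) (fun _ _ => Nat.zero_le _) hi
        · simp [Finsupp.notMem_support_iff.mp hi]
      calc d i ≤ d.sum fun _ k => k := this
        _ ≤ N := le_of_lt hdeg
        _ = c i := by simp [hc]
    rw [map_sub, MvPolynomial.coeff_coe, hTcoeff, if_pos hdc, sub_self]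
  have hpoly : ∀ P : MvPolynomial (Fin n) K,
      ψ (P : MvPowerSeries (Fin n) K) - ψ' (P : MvPowerSeries (Fin n) K) ∈ maxIdeal n K ^ N := by
    intro P
    induction P using MvPolynomial.induction_on with
    | C a =>
        have : ((MvPolynomial.C a : MvPolynomial (Fin n) K) : MvPowerSeries (Fin n) K)
            = algebraMap K (MvPowerSeries (Fin n) K) a := by
          rw [MvPolynomial.coe_C, MvPowerSeries.algebraMap_apply, Algebra.algebraMap_self, RingHom.id_apply]
        rw [this, AlgHom.commutes, AlgHom.commutes, sub_self]
        exact zero_mem _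
    | add p q hp hq =>
        rw [MvPolynomial.coe_add, map_add, map_add]
        have : ψ p + ψ q - (ψ' p + ψ' q) = (ψ p - ψ' p) + (ψ q - ψ' q) := by ring
        rw [this]
        exact add_mem hp hq
    | mul_X p i hp =>
        rw [MvPolynomial.coe_mul, MvPolynomial.coe_X, map_mul, map_mul]
        have : ψ p * ψ (MvPowerSeries.X i) - ψ' p * ψ' (MvPowerSeries.X i)
            = ψ p * (ψ (MvPowerSeries.X i) - ψ' (MvPowerSeries.X i))
              + (ψ p - ψ' p) * ψ' (MvPowerSeries.X i) := by ring
        rw [this]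
        exact add_mem (Ideal.mul_mem_left _ _ (h i)) (Ideal.mul_mem_right _ _ hp)
  have key : ψ f - ψ' f = (ψ (f - T) - ψ' (f - T)) + (ψ T - ψ' T) := by
    rw [map_sub, map_sub]; ring
  rw [key]
  exact add_mem (sub_mem (apply_mem_pow ψ hψ hresid) (apply_mem_pow ψ' hψ' hresid)) (hpoly T)

end Aux2

/-- convergence lemma, parts (3) and (4):
in the situation of the convergence lemma, with `Ψ` the limit automorphism
`x_i ↦ x_i + b_i` (where `Φ_p(x_i) → x_i + b_i`) and `u∞` the `m`-adic limit
of `(u_p)`, for every power series `f₀` the sequence `(Φ_p(f₀))_p` converges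
`m`-adically to `Ψ(f₀)`, and `(u_p · Φ_p(f₀))_p` converges to `u∞ · Ψ(f₀)`. -/
theorem convergence_lemma_apply
    {n : ℕ} {K : Type} [Field K] (M : ℕ) (hM : 1 ≤ M)
    (b0 : ℕ → MvPowerSeries (Fin n) K)
    (hb0 : ∀ p, 1 ≤ p → b0 p ∈ maxIdeal n K ^ (M + p - 1))
    (b : ℕ → Fin n → MvPowerSeries (Fin n) K)
    (hb : ∀ p, 1 ≤ p → ∀ i, b p i ∈ maxIdeal n K ^ (M + p))
    (φ : ℕ → (MvPowerSeries (Fin n) K →ₐ[K] MvPowerSeries (Fin n) K))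
    (hφloc : ∀ p, ∀ g ∈ maxIdeal n K, φ p g ∈ maxIdeal n K)
    (hφX : ∀ p, 1 ≤ p → ∀ i,
      φ p (MvPowerSeries.X i) = MvPowerSeries.X i + b p i)
    (Φ : ℕ → (MvPowerSeries (Fin n) K →ₐ[K] MvPowerSeries (Fin n) K))
    (hΦ0 : Φ 0 = AlgHom.id K (MvPowerSeries (Fin n) K))
    (hΦ : ∀ p, Φ (p + 1) = (φ (p + 1)).comp (Φ p))
    (u : ℕ → MvPowerSeries (Fin n) K)
    (hu0 : u 0 = 1)
    (hu : ∀ p, u (p + 1) = (1 + b0 (p + 1)) * φ (p + 1) (u p))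
    (blim : Fin n → MvPowerSeries (Fin n) K)
    (hblim : ∀ i, MAdicTendsto (fun p => Φ p (MvPowerSeries.X i))
      (MvPowerSeries.X i + blim i))
    (Ψ : MvPowerSeries (Fin n) K ≃ₐ[K] MvPowerSeries (Fin n) K)
    (hΨ : ∀ i, Ψ (MvPowerSeries.X i) = MvPowerSeries.X i + blim i)
    (ulim : MvPowerSeries (Fin n) K)
    (hulim : MAdicTendsto u ulim) :
    ∀ f0 : MvPowerSeries (Fin n) K,
      MAdicTendsto (fun p => Φ p f0) (Ψ f0) ∧
      MAdicTendsto (fun p => u p * Φ p f0) (ulim * Ψ f0) := by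
  have hΦX : ∀ p (i : Fin n), Φ p (MvPowerSeries.X i) ∈ maxIdeal n K := by
    intro p
    induction p with
    | zero => intro i; rw [hΦ0]; exact X_mem_maxIdeal i
    | succ p ih =>
        intro i
        rw [hΦ p, AlgHom.comp_apply]
        exact hφloc (p + 1) _ (ih i)
  have hblimm : ∀ i, blim i ∈ maxIdeal n K := by
    intro i
    obtain ⟨P, hP⟩ := hblim i 1
    have h1 := hP P le_rfl
    rw [pow_one] at h1
    have : blim i = Φ P (MvPowerSeries.X i) - MvPowerSeries.X i
        - (Φ P (MvPowerSeries.X i) - (MvPowerSeries.X i + blim i)) := by ring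
    rw [this]
    exact sub_mem (sub_mem (hΦX P i) (X_mem_maxIdeal i)) h1
  have hΨX : ∀ i, (Ψ : MvPowerSeries (Fin n) K →ₐ[K] MvPowerSeries (Fin n) K)
      (MvPowerSeries.X i) ∈ maxIdeal n K := by
    intro i
    show Ψ (MvPowerSeries.X i) ∈ maxIdeal n K
    rw [hΨ i]
    exact add_mem (X_mem_maxIdeal i) (hblimm i)
  have part3 : ∀ f0 : MvPowerSeries (Fin n) K, MAdicTendsto (fun p => Φ p f0) (Ψ f0) := by
    intro f0 N
    choose Pf hPf using fun i => hblim i N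
    refine ⟨Finset.univ.sup Pf, fun p hp => ?_⟩
    have hdiffX : ∀ i, Φ p (MvPowerSeries.X i)
        - (Ψ : MvPowerSeries (Fin n) K →ₐ[K] MvPowerSeries (Fin n) K) (MvPowerSeries.X i)
        ∈ maxIdeal n K ^ N := by
      intro i
      show Φ p (MvPowerSeries.X i) - Ψ (MvPowerSeries.X i) ∈ _
      rw [hΨ i]
      exact hPf i p (le_trans (Finset.le_sup (Finset.mem_univ i)) hp)
    exact hom_diff (Φ p) Ψ (hΦX p) hΨX N hdiffX f0
  intro f0
  refine ⟨part3 f0, ?_⟩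
  intro N
  obtain ⟨P1, hP1⟩ := part3 f0 N
  obtain ⟨P2, hP2⟩ := hulim N
  refine ⟨max P1 P2, fun p hp => ?_⟩
  have e : u p * Φ p f0 - ulim * Ψ f0
      = u p * (Φ p f0 - Ψ f0) + (u p - ulim) * Ψ f0 := by ring
  rw [e]
  exact add_mem (Ideal.mul_mem_left _ _ (hP1 p (le_trans (le_max_left _ _) hp)))
    (Ideal.mul_mem_right _ _ (hP2 p (le_trans (le_max_right _ _) hp)))
end

section
/- Let K be a field, let f be a power series in K[[x_1,...,x_n]] and let phi be a local K-algebra automorphism of K[[x_1,...,x_n]]. Then J(phi(f)) = phi(J(f)), i.e. the Jacobian ideal of phi(f) equals the image under phi of the Jacobian ideal of f. In particular, the Milnor number mu(f) = dim_K K[[x_1,...,x_n]]/J(f) is invariant under right equivalence. -/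
namespace Aux
open MvPowerSeries Finsupp Finset

variable {n : ℕ} {K : Type} [Field K]

lemma coeff_pderiv (i : Fin n) (f : MvPowerSeries (Fin n) K) (d : Fin n →₀ ℕ) :
    MvPowerSeries.coeff d (pderiv i f)
      = ((d i : K) + 1) * MvPowerSeries.coeff (d + Finsupp.single i 1) f := rfl

lemma pderiv_add (i : Fin n) (f g : MvPowerSeries (Fin n) K) :
    pderiv i (f + g) = pderiv i f + pderiv i g := by
  ext d
  simp [coeff_pderiv, map_add, mul_add]

lemma pderiv_sub (i : Fin n) (f g : MvPowerSeries (Fin n) K) :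
    pderiv i (f - g) = pderiv i f - pderiv i g := by
  ext d
  simp [coeff_pderiv, map_sub, mul_sub]

lemma pderiv_C (i : Fin n) (a : K) :
    pderiv i (MvPowerSeries.C a) = 0 := by
  ext d
  rw [coeff_pderiv, MvPowerSeries.coeff_C]
  rw [if_neg, mul_zero, map_zero]
  intro h
  have := DFunLike.congr_fun h i
  simp at this

lemma pderiv_X (i j : Fin n) :
    pderiv i (MvPowerSeries.X j : MvPowerSeries (Fin n) K)
      = if i = j then 1 else 0 := by
  ext d
  rw [coeff_pderiv, MvPowerSeries.coeff_X]
  by_cases h : d + Finsupp.single i 1 = Finsupp.single j 1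
  · have hij : i = j := by
      by_contra hne
      have := DFunLike.congr_fun h i
      simp [Finsupp.single_apply, hne, Ne.symm hne] at this
    subst hij
    have hd : d = 0 := by
      have := add_right_cancel (h.trans (zero_add _).symm)
      exact this
    subst hd
    simp [h]
  · rw [if_neg h, mul_zero]
    by_cases hij : i = j
    · subst hij
      rw [if_pos rfl, MvPowerSeries.coeff_one, if_neg]
      rintro rfl
      exact h (zero_add _)
    · simp [hij]

lemma shift_sum (i : Fin n) (d : Fin n →₀ ℕ) (F G : (Fin n →₀ ℕ) → K) :
    ∑ p ∈ Finset.HasAntidiagonal.antidiagonal d,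
        (fun p : (Fin n →₀ ℕ) × (Fin n →₀ ℕ) =>
          (((p.1 i : ℕ) : K) + 1) * F (p.1 + Finsupp.single i 1) * G p.2) p
      = ∑ q ∈ Finset.HasAntidiagonal.antidiagonal (d + Finsupp.single i 1),
        (fun q : (Fin n →₀ ℕ) × (Fin n →₀ ℕ) =>
          ((q.1 i : ℕ) : K) * (F q.1 * G q.2)) q := by
  classical
  set e := Finsupp.single i 1 with he
  have hinj : Function.Injective (fun p : (Fin n →₀ ℕ) × (Fin n →₀ ℕ) => (p.1 + e, p.2)) := by
    intro p q h
    simp only [Prod.mk.injEq] at h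
    exact Prod.ext (add_right_cancel h.1) h.2
  set emb : ((Fin n →₀ ℕ) × (Fin n →₀ ℕ)) ↪ ((Fin n →₀ ℕ) × (Fin n →₀ ℕ)) := ⟨_, hinj⟩
  have hsub : (Finset.HasAntidiagonal.antidiagonal d).map emb ⊆ Finset.HasAntidiagonal.antidiagonal (d + e) := by
    intro q hq
    rw [Finset.mem_map] at hq
    obtain ⟨p, hp, rfl⟩ := hq
    rw [Finset.HasAntidiagonal.mem_antidiagonal] at hp ⊢
    simp only [emb, Function.Embedding.coeFn_mk]
    rw [add_right_comm, hp]
  have hzero : ∀ q ∈ Finset.HasAntidiagonal.antidiagonal (d + e), q ∉ (Finset.HasAntidiagonal.antidiagonal d).map emb →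
      ((q.1 i : ℕ) : K) * (F q.1 * G q.2) = 0 := by
    intro q hq hq'
    have h0 : q.1 i = 0 := by
      by_contra hne
      apply hq'
      have hle : e ≤ q.1 := by
        rw [he, Finsupp.single_le_iff]
        exact Nat.one_le_iff_ne_zero.mpr hne
      have hc : q.1 - e + e = q.1 := tsub_add_cancel_of_le hle
      rw [Finset.mem_map]
      refine ⟨(q.1 - e, q.2), ?_, ?_⟩
      · rw [Finset.HasAntidiagonal.mem_antidiagonal]
        rw [Finset.HasAntidiagonal.mem_antidiagonal] at hq
        apply add_right_cancel (b := e)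
        rw [add_right_comm, hc, hq]
      · simp only [emb, Function.Embedding.coeFn_mk, hc]
    rw [h0]
    simp
  rw [← Finset.sum_subset hsub hzero, Finset.sum_map]
  apply Finset.sum_congr rfl
  intro p _
  simp only [emb, Function.Embedding.coeFn_mk]
  rw [he]
  rw [Finsupp.add_apply, Finsupp.single_eq_same]
  push_cast
  ring

lemma pderiv_mul (i : Fin n) (f g : MvPowerSeries (Fin n) K) :
    pderiv i (f * g) = pderiv i f * g + f * pderiv i g := by
  classical
  ext d
  rw [map_add, coeff_pderiv, MvPowerSeries.coeff_mul, MvPowerSeries.coeff_mul,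
    MvPowerSeries.coeff_mul]
  simp only [coeff_pderiv]
  have h1 := shift_sum i d (fun a => MvPowerSeries.coeff a f) (fun b => MvPowerSeries.coeff b g)
  have h2 := shift_sum i d (fun a => MvPowerSeries.coeff a g) (fun b => MvPowerSeries.coeff b f)
  simp only at h1 h2
  have h2' : ∑ p ∈ Finset.HasAntidiagonal.antidiagonal d,
        MvPowerSeries.coeff p.1 f *
          ((((p.2 i : ℕ) : K) + 1) * MvPowerSeries.coeff (p.2 + Finsupp.single i 1) g)
      = ∑ p ∈ Finset.HasAntidiagonal.antidiagonal d,
        (((p.1 i : ℕ) : K) + 1) * MvPowerSeries.coeff (p.1 + Finsupp.single i 1) g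
          * MvPowerSeries.coeff p.2 f := by
    apply Finset.sum_equiv (Equiv.prodComm _ _)
    · intro p
      simp only [Finset.HasAntidiagonal.mem_antidiagonal, Equiv.prodComm_apply, Prod.fst_swap, Prod.snd_swap]
      constructor <;> intro h <;> rw [← h] <;> exact (add_comm _ _)
    · intro p _
      simp only [Equiv.prodComm_apply, Prod.fst_swap, Prod.snd_swap]
      ring
  have hswap : Finset.sum (Finset.HasAntidiagonal.antidiagonal (d + Finsupp.single i 1))
        (fun q : (Fin n →₀ ℕ) × (Fin n →₀ ℕ) =>
          ((q.1 i : ℕ) : K) * (MvPowerSeries.coeff q.1 g * MvPowerSeries.coeff q.2 f))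
      = Finset.sum (Finset.HasAntidiagonal.antidiagonal (d + Finsupp.single i 1))
        (fun q : (Fin n →₀ ℕ) × (Fin n →₀ ℕ) =>
          ((q.2 i : ℕ) : K) * (MvPowerSeries.coeff q.1 f * MvPowerSeries.coeff q.2 g)) := by
    apply Finset.sum_equiv (Equiv.prodComm _ _)
    · intro p
      simp only [Finset.HasAntidiagonal.mem_antidiagonal, Equiv.prodComm_apply, Prod.fst_swap, Prod.snd_swap]
      constructor <;> intro h <;> rw [← h] <;> exact (add_comm _ _)
    · intro p _
      simp only [Equiv.prodComm_apply, Prod.fst_swap, Prod.snd_swap]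
      ring
  rw [h2', h2, hswap, h1, Finset.mul_sum, ← Finset.sum_add_distrib]
  apply Finset.sum_congr rfl
  intro q hq
  rw [Finset.HasAntidiagonal.mem_antidiagonal] at hq
  have hqi : q.1 i + q.2 i = d i + 1 := by
    have := DFunLike.congr_fun hq i
    simpa [Finsupp.add_apply, Finsupp.single_eq_same] using this
  have hcast : ((q.1 i : ℕ) : K) + ((q.2 i : ℕ) : K) = (d i : K) + 1 := by
    have h' : ((q.1 i + q.2 i : ℕ) : K) = ((d i + 1 : ℕ) : K) := by rw [hqi]
    push_cast at h'
    exact h'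
  rw [← add_mul, hcast]

lemma degree_add (a b : Fin n →₀ ℕ) : Finsupp.degree (a + b) = Finsupp.degree a + Finsupp.degree b := by
  simp only [Finsupp.degree_eq_weight_one]
  exact map_add _ _ _

/-- The ideal of power series whose coefficients vanish in degrees `< k`. -/
def Iord (k : ℕ) : Ideal (MvPowerSeries (Fin n) K) where
  carrier := {f | ∀ d : Fin n →₀ ℕ, Finsupp.degree d < k → MvPowerSeries.coeff d f = 0}
  zero_mem' := by intro d _; simp
  add_mem' := by
    intro a b ha hb d hd
    rw [map_add, ha d hd, hb d hd, add_zero]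
  smul_mem' := by
    classical
    intro c f hf d hd
    rw [smul_eq_mul, MvPowerSeries.coeff_mul]
    apply Finset.sum_eq_zero
    intro p hp
    rw [Finset.HasAntidiagonal.mem_antidiagonal] at hp
    have : Finsupp.degree p.2 < k := by
      have := degree_add p.1 p.2
      rw [hp] at this
      omega
    rw [hf p.2 this, mul_zero]

lemma X_mem_maxIdeal (j : Fin n) : (MvPowerSeries.X j : MvPowerSeries (Fin n) K) ∈ maxIdeal n K :=
  Ideal.subset_span ⟨j, rfl⟩

lemma maxIdeal_le_Iord_one : maxIdeal n K ≤ (Iord 1 : Ideal (MvPowerSeries (Fin n) K)) := by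
  rw [maxIdeal, Ideal.span_le]
  rintro _ ⟨j, rfl⟩
  intro d hd
  have hd0 : d = 0 := by
    rwa [Nat.lt_one_iff, Finsupp.degree_eq_zero_iff] at hd
  subst hd0
  rw [MvPowerSeries.coeff_X, if_neg]
  intro h
  have := DFunLike.congr_fun h j
  simp at this

lemma maxIdeal_pow_le_Iord (k : ℕ) :
    (maxIdeal n K) ^ k ≤ (Iord k : Ideal (MvPowerSeries (Fin n) K)) := by
  induction k with
  | zero => intro f _ d hd; omega
  | succ k ih =>
    rw [pow_succ]
    apply Ideal.mul_le.mpr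
    intro a ha b hb d hd
    classical
    have ha' : a ∈ (Iord k : Ideal (MvPowerSeries (Fin n) K)) := ih ha
    have hb' : b ∈ (Iord 1 : Ideal (MvPowerSeries (Fin n) K)) := maxIdeal_le_Iord_one hb
    rw [MvPowerSeries.coeff_mul]
    apply Finset.sum_eq_zero
    intro p hp
    rw [Finset.HasAntidiagonal.mem_antidiagonal] at hp
    have hdeg : Finsupp.degree p.1 + Finsupp.degree p.2 < k + 1 := by
      rw [← degree_add, hp]; exact hd
    by_cases h1 : Finsupp.degree p.1 < k
    · rw [ha' p.1 h1, zero_mul]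
    · have : Finsupp.degree p.2 < 1 := by omega
      rw [hb' p.2 this, mul_zero]

/-- Auxiliary "section" extracting the part of `g` to be divided by `X j`. -/
noncomputable def sec (j : Fin n) (g : MvPowerSeries (Fin n) K) : MvPowerSeries (Fin n) K :=
  fun d => if ∀ l : Fin n, l < j → d l = 0 then MvPowerSeries.coeff (d + Finsupp.single j 1) g else 0

lemma sec_mem_Iord {k : ℕ} {g : MvPowerSeries (Fin n) K} (hg : g ∈ (Iord (k+1) : Ideal (MvPowerSeries (Fin n) K)))
    (j : Fin n) : sec j g ∈ (Iord k : Ideal (MvPowerSeries (Fin n) K)) := by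
  intro d hd
  show (if ∀ l : Fin n, l < j → d l = 0 then MvPowerSeries.coeff (d + Finsupp.single j 1) g else 0) = 0
  split_ifs with h
  · apply hg
    rw [degree_add]
    have : Finsupp.degree (Finsupp.single j 1) = 1 := by
      exact Finsupp.degree_single _ _
    omega
  · rfl

lemma sum_X_sec {k : ℕ} (g : MvPowerSeries (Fin n) K)
    (hg : g ∈ (Iord (k+1) : Ideal (MvPowerSeries (Fin n) K))) :
    ∑ j : Fin n, MvPowerSeries.X j * sec j g = g := by
  classical
  ext m
  rw [map_sum]
  have hX : ∀ j : Fin n, MvPowerSeries.coeff m (MvPowerSeries.X j * sec j g)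
      = if Finsupp.single j 1 ≤ m then MvPowerSeries.coeff (m - Finsupp.single j 1) (sec j g) else 0 := by
    intro j
    rw [MvPowerSeries.X, MvPowerSeries.coeff_monomial_mul]
    split_ifs <;> simp
  by_cases hm : m = 0
  · subst hm
    have h0 : MvPowerSeries.coeff 0 g = 0 := hg 0 (by simp [map_zero])
    rw [h0]
    apply Finset.sum_eq_zero
    intro j _
    rw [hX j, if_neg]
    intro hle
    have := hle j
    simp [Finsupp.single_apply] at this
  · have hsupp : m.support.Nonempty := by
      rwa [Finsupp.support_nonempty_iff]
    set j0 := m.support.min' hsupp with hj0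
    have hj0mem : j0 ∈ m.support := Finset.min'_mem _ _
    have hj0ne : m j0 ≠ 0 := Finsupp.mem_support_iff.mp hj0mem
    rw [Finset.sum_eq_single j0]
    · rw [hX j0]
      have hle : Finsupp.single j0 1 ≤ m := by
        rw [Finsupp.single_le_iff]; omega
      rw [if_pos hle]
      show (if ∀ l : Fin n, l < j0 → ((m - Finsupp.single j0 1 : Fin n →₀ ℕ)) l = 0
          then MvPowerSeries.coeff ((m - Finsupp.single j0 1) + Finsupp.single j0 1) g else 0) = _
      rw [if_pos, tsub_add_cancel_of_le hle]
      intro l hl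
      have hlnot : l ∉ m.support := fun hmem => absurd (Finset.min'_le _ _ hmem) (by omega)
      have hml : m l = 0 := by rwa [Finsupp.mem_support_iff, not_not] at hlnot
      rw [Finsupp.tsub_apply, hml]
      simp
    · intro j _ hj
      rw [hX j]
      split_ifs with hle
      · show (if ∀ l : Fin n, l < j → ((m - Finsupp.single j 1 : Fin n →₀ ℕ)) l = 0
            then MvPowerSeries.coeff ((m - Finsupp.single j 1) + Finsupp.single j 1) g else 0) = 0
        rw [if_neg]
        intro hall
        -- j ∈ support, and all l < j have m l = 0; so j0 ≥ j; but j0 ≠ j and j0 ∈ support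
        have hjmem : j ∈ m.support := by
          rw [Finsupp.mem_support_iff]
          have := (Finsupp.single_le_iff).mp hle
          omega
        have hj0le : j0 ≤ j := Finset.min'_le _ _ hjmem
        have hj0lt : j0 < j := lt_of_le_of_ne hj0le (Ne.symm hj)
        have hthis := hall j0 hj0lt
        rw [Finsupp.tsub_apply] at hthis
        have hsingle : (Finsupp.single j 1 : Fin n →₀ ℕ) j0 = 0 := by
          rw [Finsupp.single_apply, if_neg]
          exact fun h => (ne_of_lt hj0lt).symm h
        rw [hsingle] at hthis
        have : m j0 = 0 := by omega
        exact hj0ne this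
      · rfl
    · intro h
      exact absurd (Finset.mem_univ j0) h

lemma Iord_le_maxIdeal_pow (k : ℕ) :
    (Iord k : Ideal (MvPowerSeries (Fin n) K)) ≤ (maxIdeal n K) ^ k := by
  induction k with
  | zero => intro g _; simp
  | succ k ih =>
    intro g hg
    rw [← sum_X_sec g hg]
    apply Ideal.sum_mem
    intro j _
    rw [pow_succ']
    exact Ideal.mul_mem_mul (X_mem_maxIdeal j) (ih (sec_mem_Iord hg j))

lemma mem_Iord {k : ℕ} {f : MvPowerSeries (Fin n) K} :
    f ∈ (Iord k : Ideal (MvPowerSeries (Fin n) K)) ↔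
      ∀ d : Fin n →₀ ℕ, Finsupp.degree d < k → MvPowerSeries.coeff d f = 0 :=
  Iff.rfl

lemma degree_single (i : Fin n) : Finsupp.degree (Finsupp.single i 1) = 1 := by
  exact Finsupp.degree_single _ _

lemma pderiv_mem_Iord {k : ℕ} (i : Fin n) {x : MvPowerSeries (Fin n) K}
    (hx : x ∈ (Iord (k + 1) : Ideal (MvPowerSeries (Fin n) K))) :
    pderiv i x ∈ (Iord k : Ideal (MvPowerSeries (Fin n) K)) := by
  rw [mem_Iord] at hx ⊢
  intro d hd
  rw [coeff_pderiv, hx, mul_zero]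
  rw [degree_add, degree_single]
  omega

lemma mem_maxIdeal_iff {x : MvPowerSeries (Fin n) K} :
    x ∈ maxIdeal n K ↔ ¬ IsUnit x := by
  constructor
  · intro hx hu
    have h0 : MvPowerSeries.coeff 0 x = 0 := by
      have := maxIdeal_pow_le_Iord (n := n) (K := K) 1
      rw [pow_one] at this
      exact mem_Iord.mp (this hx) 0 (by simp)
    have h1 : IsUnit (MvPowerSeries.constantCoeff x) :=
      MvPowerSeries.isUnit_iff_constantCoeff.mp hu
    rw [← MvPowerSeries.coeff_zero_eq_constantCoeff_apply, h0] at h1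
    exact not_isUnit_zero h1
  · intro hu
    have h0 : MvPowerSeries.coeff 0 x = 0 := by
      by_contra h
      apply hu
      rw [MvPowerSeries.isUnit_iff_constantCoeff]
      rw [MvPowerSeries.coeff_zero_eq_constantCoeff_apply] at h
      exact isUnit_iff_ne_zero.mpr h
    have : x ∈ (Iord 1 : Ideal (MvPowerSeries (Fin n) K)) := by
      rw [mem_Iord]
      intro d hd
      have : d = 0 := by
        rwa [Nat.lt_one_iff, Finsupp.degree_eq_zero_iff] at hd
      rwa [this]
    have := Iord_le_maxIdeal_pow (n := n) (K := K) 1 this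
    rwa [pow_one] at this

lemma phi_mem_maxIdeal (φ : MvPowerSeries (Fin n) K ≃ₐ[K] MvPowerSeries (Fin n) K)
    {x : MvPowerSeries (Fin n) K} (hx : x ∈ maxIdeal n K) : φ x ∈ maxIdeal n K := by
  rw [mem_maxIdeal_iff] at hx ⊢
  intro hu
  apply hx
  have := hu.map φ.symm
  rwa [AlgEquiv.symm_apply_apply] at this

lemma phi_mem_pow (φ : MvPowerSeries (Fin n) K ≃ₐ[K] MvPowerSeries (Fin n) K)
    {k : ℕ} {x : MvPowerSeries (Fin n) K} (hx : x ∈ (maxIdeal n K) ^ k) :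
    φ x ∈ (maxIdeal n K) ^ k := by
  have hmap : Ideal.map (φ : MvPowerSeries (Fin n) K →+* MvPowerSeries (Fin n) K)
      ((maxIdeal n K) ^ k) ≤ (maxIdeal n K) ^ k := by
    rw [Ideal.map_pow]
    apply Ideal.pow_right_mono
    rw [Ideal.map_le_iff_le_comap]
    intro y hy
    exact phi_mem_maxIdeal φ hy
  exact hmap (Ideal.mem_map_of_mem _ hx)

lemma phi_mem_Iord (φ : MvPowerSeries (Fin n) K ≃ₐ[K] MvPowerSeries (Fin n) K)
    {k : ℕ} {x : MvPowerSeries (Fin n) K}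
    (hx : x ∈ (Iord k : Ideal (MvPowerSeries (Fin n) K))) :
    φ x ∈ (Iord k : Ideal (MvPowerSeries (Fin n) K)) :=
  maxIdeal_pow_le_Iord k (phi_mem_pow φ (Iord_le_maxIdeal_pow k hx))

/-- Chain rule for polynomials. -/
lemma chain_poly (φ : MvPowerSeries (Fin n) K ≃ₐ[K] MvPowerSeries (Fin n) K)
    (i : Fin n) (P : MvPolynomial (Fin n) K) :
    pderiv i (φ (P : MvPowerSeries (Fin n) K))
      = ∑ j : Fin n, φ (pderiv j (P : MvPowerSeries (Fin n) K))
          * pderiv i (φ (MvPowerSeries.X j)) := by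
  induction P using MvPolynomial.induction_on with
  | C a =>
    rw [MvPolynomial.coe_C]
    have hC : (MvPowerSeries.C) a = algebraMap K (MvPowerSeries (Fin n) K) a := rfl
    rw [hC, AlgEquiv.commutes, ← hC, pderiv_C]
    apply (Finset.sum_eq_zero _).symm
    intro j _
    rw [pderiv_C, map_zero, zero_mul]
  | add p q hp hq =>
    rw [MvPolynomial.coe_add, map_add, pderiv_add, hp, hq, ← Finset.sum_add_distrib]
    apply Finset.sum_congr rfl
    intro j _
    rw [pderiv_add, map_add, add_mul]
  | mul_X p j hp =>
    rw [MvPolynomial.coe_mul, MvPolynomial.coe_X, map_mul, pderiv_mul, hp]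
    have hr : ∀ k : Fin n,
        φ (pderiv k ((p : MvPowerSeries (Fin n) K) * MvPowerSeries.X j))
            * pderiv i (φ (MvPowerSeries.X k))
          = φ (pderiv k (p : MvPowerSeries (Fin n) K)) * φ (MvPowerSeries.X j)
              * pderiv i (φ (MvPowerSeries.X k))
            + (if k = j then φ (p : MvPowerSeries (Fin n) K)
                * pderiv i (φ (MvPowerSeries.X k)) else 0) := by
      intro k
      rw [pderiv_mul, pderiv_X, map_add, map_mul]
      split_ifs with h
      · rw [mul_one, add_mul]
      · rw [mul_zero, map_zero, add_zero, add_zero]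
    rw [Finset.sum_congr rfl (fun k _ => hr k), Finset.sum_add_distrib,
      Finset.sum_ite_eq' Finset.univ j, if_pos (Finset.mem_univ j)]
    rw [Finset.sum_mul]
    congr 1
    apply Finset.sum_congr rfl
    intro k _
    ring

/-- Chain rule for power series. -/
lemma chain (φ : MvPowerSeries (Fin n) K ≃ₐ[K] MvPowerSeries (Fin n) K)
    (i : Fin n) (f : MvPowerSeries (Fin n) K) :
    pderiv i (φ f)
      = ∑ j : Fin n, φ (pderiv j f) * pderiv i (φ (MvPowerSeries.X j)) := by
  ext d
  set N : ℕ := Finsupp.degree d + 1 with hN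
  set cN : Fin n →₀ ℕ := Finsupp.equivFunOnFinite.symm (fun _ => N + 1) with hcN
  set P := MvPowerSeries.trunc K cN f with hP
  have hfP : f - (P : MvPowerSeries (Fin n) K) ∈
      (Iord (N + 1) : Ideal (MvPowerSeries (Fin n) K)) := by
    rw [mem_Iord]
    intro m hm
    rw [map_sub, MvPolynomial.coeff_coe, hP, MvPowerSeries.coeff_trunc, if_pos, sub_self]
    rw [lt_iff_le_not_ge]
    constructor
    · rw [Finsupp.le_def]
      intro l
      have := Finsupp.le_degree l m
      simp only [hcN, Finsupp.coe_equivFunOnFinite_symm]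
      omega
    · intro hcon
      have h5 := Finsupp.le_def.mp hcon i
      simp only [hcN, Finsupp.coe_equivFunOnFinite_symm] at h5
      have := Finsupp.le_degree i m
      omega
  have key : ∀ x ∈ (Iord N : Ideal (MvPowerSeries (Fin n) K)),
      MvPowerSeries.coeff d x = 0 := by
    intro x hx
    exact mem_Iord.mp hx d (by omega)
  have h1 : MvPowerSeries.coeff d (pderiv i (φ f))
      = MvPowerSeries.coeff d (pderiv i (φ (P : MvPowerSeries (Fin n) K))) := by
    have hd : φ f - φ (P : MvPowerSeries (Fin n) K) ∈
        (Iord (N + 1) : Ideal (MvPowerSeries (Fin n) K)) := by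
      rw [← map_sub]
      exact phi_mem_Iord φ hfP
    have := key _ (pderiv_mem_Iord i hd)
    rw [pderiv_sub, map_sub, sub_eq_zero] at this
    exact this
  have h2 : ∀ j : Fin n,
      MvPowerSeries.coeff d (φ (pderiv j f) * pderiv i (φ (MvPowerSeries.X j)))
        = MvPowerSeries.coeff d (φ (pderiv j (P : MvPowerSeries (Fin n) K))
            * pderiv i (φ (MvPowerSeries.X j))) := by
    intro j
    have hdj : φ (pderiv j f) - φ (pderiv j (P : MvPowerSeries (Fin n) K)) ∈
        (Iord N : Ideal (MvPowerSeries (Fin n) K)) := by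
      rw [← map_sub, ← pderiv_sub]
      exact phi_mem_Iord φ (pderiv_mem_Iord j hfP)
    have hmem : (φ (pderiv j f) - φ (pderiv j (P : MvPowerSeries (Fin n) K)))
        * pderiv i (φ (MvPowerSeries.X j)) ∈
        (Iord N : Ideal (MvPowerSeries (Fin n) K)) :=
      Ideal.mul_mem_right _ _ hdj
    have := key _ hmem
    rw [sub_mul, map_sub, sub_eq_zero] at this
    exact this
  rw [h1, map_sum, Finset.sum_congr rfl (fun j _ => h2 j), ← map_sum, ← chain_poly φ i P]

lemma jac_le (φ : MvPowerSeries (Fin n) K ≃ₐ[K] MvPowerSeries (Fin n) K)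
    (f : MvPowerSeries (Fin n) K) :
    jacobianIdeal (φ f) ≤ Ideal.map φ (jacobianIdeal f) := by
  rw [jacobianIdeal, Ideal.span_le]
  rintro _ ⟨i, rfl⟩
  show pderiv i (φ f) ∈ Ideal.map φ (jacobianIdeal f)
  rw [chain φ i f]
  apply Ideal.sum_mem
  intro j _
  apply Ideal.mul_mem_right
  exact Ideal.mem_map_of_mem _ (Ideal.subset_span ⟨j, rfl⟩)

lemma jac_eq (φ : MvPowerSeries (Fin n) K ≃ₐ[K] MvPowerSeries (Fin n) K)
    (f : MvPowerSeries (Fin n) K) :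
    jacobianIdeal (φ f) = Ideal.map φ (jacobianIdeal f) := by
  apply le_antisymm (jac_le φ f)
  have h2 := jac_le φ.symm (φ f)
  rw [AlgEquiv.symm_apply_apply] at h2
  have h3 := Ideal.map_mono (f := (φ : MvPowerSeries (Fin n) K →+* MvPowerSeries (Fin n) K)) h2
  have h4 : Ideal.map (φ : MvPowerSeries (Fin n) K →+* MvPowerSeries (Fin n) K)
      (Ideal.map φ.symm (jacobianIdeal (φ f))) = jacobianIdeal (φ f) := by
    rw [show Ideal.map φ.symm (jacobianIdeal (φ f)) = Ideal.map
      (φ.symm : MvPowerSeries (Fin n) K →+* MvPowerSeries (Fin n) K) (jacobianIdeal (φ f)) from rfl]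
    rw [Ideal.map_map]
    have : (φ : MvPowerSeries (Fin n) K →+* MvPowerSeries (Fin n) K).comp
        (φ.symm : MvPowerSeries (Fin n) K →+* MvPowerSeries (Fin n) K) = RingHom.id _ := by
      ext x
      simp
    rw [this, Ideal.map_id]
  calc Ideal.map φ (jacobianIdeal f)
      = Ideal.map (φ : MvPowerSeries (Fin n) K →+* MvPowerSeries (Fin n) K) (jacobianIdeal f) := rfl
    _ ≤ _ := le_of_le_of_eq h3 h4

end Aux

/-- `J(φ(f)) = φ(J(f))` for any `K`-algebra automorphism
`φ`; in particular the Milnor number is invariant under right equivalence. -/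
theorem jacobianIdeal_map_algEquiv
    {n : ℕ} {K : Type} [Field K] (f : MvPowerSeries (Fin n) K)
    (φ : MvPowerSeries (Fin n) K ≃ₐ[K] MvPowerSeries (Fin n) K) :
    jacobianIdeal (φ f) = Ideal.map φ (jacobianIdeal f) ∧
      ∀ g : MvPowerSeries (Fin n) K, RightEquiv f g →
        Module.rank K (MvPowerSeries (Fin n) K ⧸ jacobianIdeal f) =
          Module.rank K (MvPowerSeries (Fin n) K ⧸ jacobianIdeal g) := by
  open Aux in
  exact ⟨jac_eq φ f, by
    rintro g ⟨ψ, rfl⟩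
    have heq : jacobianIdeal (ψ g) = Ideal.map
        (ψ : MvPowerSeries (Fin n) K →+* MvPowerSeries (Fin n) K) (jacobianIdeal g) := jac_eq ψ g
    have e := Ideal.quotientEquivAlg (jacobianIdeal g) (jacobianIdeal (ψ g)) ψ heq
    exact (e.toLinearEquiv.rank_eq).symm⟩
end

section
/- Let K be a field, let f be a power series in K[[x_1,...,x_n]], let u be a unit of K[[x_1,...,x_n]] and let phi be a local K-algebra automorphism of K[[x_1,...,x_n]]. Then T(u * phi(f)) = phi(T(f)), i.e. the Tjurina ideal of u * phi(f) equals the image under phi of the Tjurina ideal of f. In particular, the Tjurina number tau(f) = dim_K K[[x_1,...,x_n]]/T(f) is invariant under contact equivalence. -/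
namespace TjurinaAux
variable {n : ℕ} {K : Type} [Field K]
open Finset MvPowerSeries

/-! ### basic properties of `pderiv` -/

theorem coeff_pd (i : Fin n) (f : MvPowerSeries (Fin n) K) (d : Fin n →₀ ℕ) :
    MvPowerSeries.coeff d (pderiv i f) =
      ((d i : K) + 1) * MvPowerSeries.coeff (d + Finsupp.single i 1) f := rfl

theorem pderiv_add (i : Fin n) (f g : MvPowerSeries (Fin n) K) :
    pderiv i (f + g) = pderiv i f + pderiv i g := by
  ext d
  simp [coeff_pd, map_add, mul_add]

theorem key (i : Fin n) (F G : (Fin n →₀ ℕ) → K) (d : Fin n →₀ ℕ) :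
    ∑ p ∈ antidiagonal d, F p.1 * (((p.2 i : K) + 1) * G (p.2 + Finsupp.single i 1))
      = ∑ p ∈ antidiagonal (d + Finsupp.single i 1), F p.1 * ((p.2 i : K) * G p.2) := by
  rw [show (∑ p ∈ antidiagonal (d + Finsupp.single i 1), F p.1 * ((p.2 i : K) * G p.2))
      = ∑ p ∈ (antidiagonal (d + Finsupp.single i 1)).filter (fun p => p.2 i ≠ 0),
          F p.1 * ((p.2 i : K) * G p.2) from
    (Finset.sum_filter_of_ne (by intro p hp h h0; apply h; simp [h0])).symm]
  refine Finset.sum_bij' (fun p _ => (p.1, p.2 + Finsupp.single i 1))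
    (fun p _ => (p.1, p.2 - Finsupp.single i 1)) ?_ ?_ ?_ ?_ ?_
  · intro p hp
    simp only [Finset.HasAntidiagonal.mem_antidiagonal] at hp
    simp only [mem_filter, Finset.HasAntidiagonal.mem_antidiagonal]
    refine ⟨by rw [← add_assoc, hp], by simp⟩
  · intro p hp
    simp only [mem_filter, Finset.HasAntidiagonal.mem_antidiagonal] at hp
    obtain ⟨h1, h2⟩ := hp
    have hle : Finsupp.single i 1 ≤ p.2 := by
      rw [Finsupp.single_le_iff]; omega
    simp only [Finset.HasAntidiagonal.mem_antidiagonal]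
    have : p.1 + (p.2 - Finsupp.single i 1) + Finsupp.single i 1 = d + Finsupp.single i 1 := by
      rw [add_assoc, tsub_add_cancel_of_le hle, h1]
    exact add_right_cancel this
  · intro p hp; simp
  · intro p hp
    simp only [mem_filter, Finset.HasAntidiagonal.mem_antidiagonal] at hp
    have hle : Finsupp.single i 1 ≤ p.2 := by
      rw [Finsupp.single_le_iff]; omega
    simp [tsub_add_cancel_of_le hle]
  · intro p hp
    congr 2
    simp only [Finsupp.coe_add, Pi.add_apply, Finsupp.single_apply, if_pos rfl]
    push_cast
    ring

theorem pderiv_mul (i : Fin n) (f g : MvPowerSeries (Fin n) K) :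
    pderiv i (f * g) = f * pderiv i g + g * pderiv i f := by
  ext d
  have h1 : (MvPowerSeries.coeff d) (f * pderiv i g)
      = ∑ p ∈ antidiagonal (d + Finsupp.single i 1),
          (MvPowerSeries.coeff p.1) f * ((p.2 i : K) * (MvPowerSeries.coeff p.2) g) := by
    rw [MvPowerSeries.coeff_mul]
    exact key i (fun e => (MvPowerSeries.coeff e) f) (fun e => (MvPowerSeries.coeff e) g) d
  have h2 : (MvPowerSeries.coeff d) (g * pderiv i f)
      = ∑ p ∈ antidiagonal (d + Finsupp.single i 1),
          (MvPowerSeries.coeff p.2) g * ((p.1 i : K) * (MvPowerSeries.coeff p.1) f) := by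
    rw [MvPowerSeries.coeff_mul,
      show (∑ p ∈ antidiagonal d, (MvPowerSeries.coeff p.1) g
          * (MvPowerSeries.coeff p.2) (pderiv i f))
        = ∑ p ∈ antidiagonal (d + Finsupp.single i 1),
          (MvPowerSeries.coeff p.1) g * ((p.2 i : K) * (MvPowerSeries.coeff p.2) f) from
      key i (fun e => (MvPowerSeries.coeff e) g) (fun e => (MvPowerSeries.coeff e) f) d,
    ]
    refine Finset.sum_equiv (Equiv.prodComm _ _) ?_ ?_
    · intro p
      simp only [Finset.HasAntidiagonal.mem_antidiagonal, Equiv.prodComm_apply, Prod.fst_swap, Prod.snd_swap]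
      rw [add_comm]
    · intro p _
      rfl
  rw [map_add, h1, h2, coeff_pd, MvPowerSeries.coeff_mul, Finset.mul_sum,
    ← Finset.sum_add_distrib]
  apply Finset.sum_congr rfl
  intro p hp
  rw [Finset.HasAntidiagonal.mem_antidiagonal] at hp
  have hnat : p.1 i + p.2 i = d i + 1 := by
    have := congrArg (fun x => x i) hp
    simpa [Finsupp.single_apply] using this
  have hK : ((d i : K) + 1) = (p.1 i : K) + (p.2 i : K) := by
    have : ((p.1 i + p.2 i : ℕ) : K) = ((d i + 1 : ℕ) : K) := by rw [hnat]
    push_cast at this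
    exact this.symm
  have htriv : ∀ a b c x y : K, a + 1 = b + c → (a + 1) * (x * y) = x * (c * y) + y * (b * x) := by
    intro a b c x y h
    rw [h]; ring
  exact htriv _ _ _ _ _ hK

theorem pderiv_algebraMap (i : Fin n) (a : K) :
    pderiv i (algebraMap K (MvPowerSeries (Fin n) K) a) = 0 := by
  ext d
  rw [coeff_pd, ← MvPowerSeries.c_eq_algebraMap, MvPowerSeries.coeff_C]
  rw [if_neg (by
    intro h
    have := congrArg (fun x => x i) h
    simp [Finsupp.single_apply] at this)]
  simp

theorem pderiv_X (i j : Fin n) :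
    pderiv i (MvPowerSeries.X j : MvPowerSeries (Fin n) K)
      = if j = i then 1 else 0 := by
  ext d
  rw [coeff_pd, MvPowerSeries.coeff_X]
  by_cases hji : j = i
  · subst hji
    rw [if_pos rfl]
    by_cases hd : d = 0
    · subst hd
      rw [if_pos (by rw [zero_add]), MvPowerSeries.coeff_one, if_pos rfl]
      simp
    · rw [if_neg (fun h => hd (add_right_cancel (h.trans (zero_add _).symm))),
        MvPowerSeries.coeff_one, if_neg hd]
      ring
  · rw [if_neg hji]
    have hne : d + Finsupp.single i 1 ≠ Finsupp.single j 1 := by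
      intro h
      have := congrArg (fun x => x i) h
      simp only [Finsupp.coe_add, Pi.add_apply] at this
      rw [Finsupp.single_apply, Finsupp.single_apply, if_pos rfl, if_neg hji] at this
      omega
    rw [if_neg hne, MvPowerSeries.coeff_zero]
    ring

/-! ### degree and the ideals of high-order series -/

def deg (d : Fin n →₀ ℕ) : ℕ := ∑ i, d i

theorem deg_add (a b : Fin n →₀ ℕ) : deg (a + b) = deg a + deg b := by
  simp [deg, Finset.sum_add_distrib]

theorem deg_single (i : Fin n) : deg (Finsupp.single i 1) = 1 := by
  simp [deg, Finsupp.single_apply]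

theorem deg_eq_zero_iff (d : Fin n →₀ ℕ) : deg d = 0 ↔ d = 0 := by
  constructor
  · intro h
    ext i
    have := Finset.sum_eq_zero_iff.mp h i (Finset.mem_univ i)
    simpa using this
  · rintro rfl; simp [deg]

variable (n K) in
def lowOrder (N : ℕ) : Ideal (MvPowerSeries (Fin n) K) where
  carrier := {f | ∀ d : Fin n →₀ ℕ, deg d < N → MvPowerSeries.coeff d f = 0}
  zero_mem' := by intro d _; simp
  add_mem' := by
    intro f g hf hg d hd
    rw [map_add, hf d hd, hg d hd, add_zero]
  smul_mem' := by
    intro c f hf d hd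
    rw [smul_eq_mul, MvPowerSeries.coeff_mul]
    apply Finset.sum_eq_zero
    intro p hp
    rw [Finset.HasAntidiagonal.mem_antidiagonal] at hp
    have : deg p.2 ≤ deg d := by
      rw [← hp, deg_add]; omega
    rw [hf p.2 (lt_of_le_of_lt this hd), mul_zero]

theorem mem_lowOrder (N : ℕ) (f : MvPowerSeries (Fin n) K) :
    f ∈ lowOrder n K N ↔ ∀ d : Fin n →₀ ℕ, deg d < N → MvPowerSeries.coeff d f = 0 :=
  Iff.rfl

theorem lowOrder_mul_le (a b : ℕ) :
    lowOrder n K a * lowOrder n K b ≤ lowOrder n K (a + b) := by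
  rw [Ideal.mul_le]
  intro f hf g hg
  intro d hd
  rw [MvPowerSeries.coeff_mul]
  apply Finset.sum_eq_zero
  intro p hp
  rw [Finset.HasAntidiagonal.mem_antidiagonal] at hp
  have hdeg : deg p.1 + deg p.2 < a + b := by
    rw [← deg_add, hp]; exact hd
  rcases lt_or_ge (deg p.1) a with h | h
  · rw [hf p.1 h, zero_mul]
  · rw [hg p.2 (by omega), mul_zero]

variable (n K) in
noncomputable def mo : Ideal (MvPowerSeries (Fin n) K) :=
  RingHom.ker (MvPowerSeries.constantCoeff)

theorem mo_le_lowOrder : mo n K ≤ lowOrder n K 1 := by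
  intro f hf d hd
  have hd0 : d = 0 := by
    rw [← deg_eq_zero_iff]; omega
  subst hd0
  rw [MvPowerSeries.coeff_zero_eq_constantCoeff]
  exact hf

theorem pow_mo_le_lowOrder (k : ℕ) : mo n K ^ k ≤ lowOrder n K k := by
  induction k with
  | zero => intro f _ d hd; omega
  | succ k ih =>
      calc mo n K ^ (k + 1) = mo n K ^ k * mo n K := pow_succ _ _
      _ ≤ lowOrder n K k * lowOrder n K 1 := Ideal.mul_mono ih mo_le_lowOrder
      _ ≤ lowOrder n K (k + 1) := lowOrder_mul_le k 1

theorem lowOrder_le_pow_mo (k : ℕ) : lowOrder n K k ≤ mo n K ^ k := by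
  induction k with
  | zero => intro f _; simp
  | succ k ih =>
      intro f hf
      classical
      set g : Fin n → MvPowerSeries (Fin n) K := fun j d' =>
        if ∀ i' : Fin n, i' < j → d' i' = 0 then
          MvPowerSeries.coeff (d' + Finsupp.single j 1) f else 0 with hg
      have hcoeffg : ∀ j d', MvPowerSeries.coeff d' (g j) =
          if ∀ i' : Fin n, i' < j → d' i' = 0 then
            MvPowerSeries.coeff (d' + Finsupp.single j 1) f else 0 := fun _ _ => rfl
      have hgmem : ∀ j, g j ∈ lowOrder n K k := by
        intro j d' hd'
        rw [hcoeffg]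
        split
        · apply hf
          rw [deg_add, deg_single]
          omega
        · rfl
      have hdecomp : f = ∑ j : Fin n, g j * MvPowerSeries.X j := by
        ext d
        rw [map_sum]
        have hterm : ∀ j : Fin n, MvPowerSeries.coeff d (g j * MvPowerSeries.X j)
            = if Finsupp.single j 1 ≤ d then MvPowerSeries.coeff (d - Finsupp.single j 1) (g j)
              else 0 := by
          intro j
          rw [MvPowerSeries.X, MvPowerSeries.coeff_mul_monomial]
          split <;> simp
        by_cases hd : d = 0
        · subst hd
          rw [hf 0 (by simp [deg])]
          apply (Finset.sum_eq_zero ?_).symm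
          intro j _
          rw [hterm j, if_neg]
          intro hle
          have := Finsupp.single_le_iff.mp hle
          simp at this
        · have hne : d.support.Nonempty := Finsupp.support_nonempty_iff.mpr hd
          set j₀ := d.support.min' hne with hj₀
          have hj₀mem : d j₀ ≠ 0 := Finsupp.mem_support_iff.mp (d.support.min'_mem hne)
          have hj₀min : ∀ i' : Fin n, i' < j₀ → d i' = 0 := by
            intro i' hi'
            by_contra h
            exact absurd (d.support.min'_le i' (Finsupp.mem_support_iff.mpr h))
              (not_le.mpr hi')
          have hle₀ : Finsupp.single j₀ 1 ≤ d := by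
            rw [Finsupp.single_le_iff]; omega
          have hmain : MvPowerSeries.coeff d (g j₀ * MvPowerSeries.X j₀)
              = MvPowerSeries.coeff d f := by
            rw [hterm j₀, if_pos hle₀, hcoeffg, if_pos, tsub_add_cancel_of_le hle₀]
            intro i' hi'
            rw [Finsupp.tsub_apply, Finsupp.single_apply,
              if_neg (by intro hh; subst hh; exact absurd hi' (lt_irrefl _)), hj₀min i' hi']
            omega
          have hzero : ∀ j : Fin n, j ≠ j₀ →
              MvPowerSeries.coeff d (g j * MvPowerSeries.X j) = 0 := by
            intro j hjne
            rw [hterm j]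
            split
            · rename_i hle
              have hdj : 1 ≤ d j := Finsupp.single_le_iff.mp hle
              rw [hcoeffg, if_neg]
              intro hall
              rcases lt_or_gt_of_ne hjne with h | h
              · have := hj₀min j h; omega
              · have h2 := hall j₀ h
                rw [Finsupp.tsub_apply, Finsupp.single_apply,
                  if_neg (by intro hh; subst hh; exact absurd h (lt_irrefl _))] at h2
                omega
            · rfl
          rw [Finset.sum_eq_single_of_mem j₀ (Finset.mem_univ j₀)
            (fun j _ hj => hzero j hj), hmain]
      rw [hdecomp]
      apply Ideal.sum_mem
      intro j _
      rw [pow_succ]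
      exact Ideal.mul_mem_mul (ih (hgmem j)) (by
        simp [mo, RingHom.mem_ker, MvPowerSeries.constantCoeff_X])

theorem lowOrder_eq_pow_mo (k : ℕ) : lowOrder n K k = mo n K ^ k :=
  le_antisymm (lowOrder_le_pow_mo k) (pow_mo_le_lowOrder k)

theorem apply_mem_mo (φ : MvPowerSeries (Fin n) K ≃ₐ[K] MvPowerSeries (Fin n) K)
    {f : MvPowerSeries (Fin n) K} (hf : f ∈ mo n K) : φ f ∈ mo n K := by
  rw [mo, RingHom.mem_ker] at hf ⊢
  by_contra h
  have h1 : IsUnit (φ f) :=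
    MvPowerSeries.isUnit_iff_constantCoeff.mpr (isUnit_iff_ne_zero.mpr h)
  have h2 : IsUnit f := by
    have := h1.map φ.symm.toRingEquiv.toRingHom
    simpa using this
  have h3 := MvPowerSeries.isUnit_iff_constantCoeff.mp h2
  rw [hf] at h3
  exact not_isUnit_zero h3

theorem apply_mem_lowOrder (φ : MvPowerSeries (Fin n) K ≃ₐ[K] MvPowerSeries (Fin n) K)
    {k : ℕ} {f : MvPowerSeries (Fin n) K} (hf : f ∈ lowOrder n K k) :
    φ f ∈ lowOrder n K k := by
  rw [lowOrder_eq_pow_mo] at hf ⊢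
  have h1 : Ideal.map (φ : MvPowerSeries (Fin n) K →+* MvPowerSeries (Fin n) K) (mo n K)
      ≤ mo n K := by
    rw [Ideal.map_le_iff_le_comap]
    intro g hg
    exact apply_mem_mo φ hg
  have h2 : φ f ∈ Ideal.map (φ : MvPowerSeries (Fin n) K →+* MvPowerSeries (Fin n) K)
      (mo n K ^ k) := Ideal.mem_map_of_mem _ hf
  rw [Ideal.map_pow] at h2
  exact Ideal.pow_right_mono h1 k h2

theorem pderiv_mem_lowOrder {k : ℕ} (i : Fin n) {f : MvPowerSeries (Fin n) K}
    (hf : f ∈ lowOrder n K (k + 1)) : pderiv i f ∈ lowOrder n K k := by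
  intro d hd
  rw [coeff_pd, hf _ (by rw [deg_add, deg_single]; omega), mul_zero]

/-! ### truncation -/

variable (n) in
noncomputable def cube (N : ℕ) : Finset (Fin n →₀ ℕ) :=
  Finset.filter (fun d => deg d < N)
    (Finset.Iic (Finsupp.equivFunOnFinite.symm fun _ : Fin n => N))

theorem mem_cube {N : ℕ} {d : Fin n →₀ ℕ} (hd : deg d < N) : d ∈ cube n N := by
  rw [cube, Finset.mem_filter]
  refine ⟨?_, hd⟩
  rw [Finset.mem_Iic]
  intro i
  have h1 : d i ≤ deg d := Finset.single_le_sum (f := fun j => d j) (fun _ _ => Nat.zero_le _)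
    (Finset.mem_univ i)
  simpa using le_trans h1 (le_of_lt hd)

noncomputable def truncP (N : ℕ) (f : MvPowerSeries (Fin n) K) : MvPolynomial (Fin n) K :=
  ∑ d ∈ cube n N, MvPolynomial.monomial d (MvPowerSeries.coeff d f)

theorem coeff_truncP (N : ℕ) (f : MvPowerSeries (Fin n) K) (d : Fin n →₀ ℕ) :
    MvPowerSeries.coeff d ((truncP N f : MvPolynomial (Fin n) K) :
        MvPowerSeries (Fin n) K) =
      if d ∈ cube n N then MvPowerSeries.coeff d f else 0 := by
  rw [MvPolynomial.coeff_coe, truncP, MvPolynomial.coeff_sum]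
  simp [MvPolynomial.coeff_monomial, Finset.sum_ite_eq]

theorem sub_truncP_mem (N : ℕ) (f : MvPowerSeries (Fin n) K) :
    f - (truncP N f : MvPolynomial (Fin n) K) ∈ lowOrder n K N := by
  intro d hd
  rw [map_sub, coeff_truncP, if_pos (mem_cube hd), sub_self]

/-! ### the chain rule -/

theorem polyChain (ψ : MvPowerSeries (Fin n) K →ₐ[K] MvPowerSeries (Fin n) K)
    (p : MvPolynomial (Fin n) K) (i : Fin n) :
    pderiv i (ψ (p : MvPowerSeries (Fin n) K)) =
      ∑ j : Fin n, ψ (pderiv j (p : MvPowerSeries (Fin n) K)) *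
        pderiv i (ψ (MvPowerSeries.X j)) := by
  induction p using MvPolynomial.induction_on with
  | C a =>
      rw [MvPolynomial.coe_C, MvPowerSeries.c_eq_algebraMap, AlgHom.commutes, pderiv_algebraMap]
      symm
      apply Finset.sum_eq_zero
      intro j _
      rw [pderiv_algebraMap, map_zero, zero_mul]
  | add p q hp hq =>
      rw [MvPolynomial.coe_add, map_add, pderiv_add, hp, hq, ← Finset.sum_add_distrib]
      apply Finset.sum_congr rfl
      intro j _
      rw [pderiv_add, map_add, add_mul]
  | mul_X p j₀ hp =>
      rw [MvPolynomial.coe_mul, MvPolynomial.coe_X, map_mul, pderiv_mul, hp, Finset.mul_sum]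
      have hterm : ∀ j : Fin n,
          ψ (pderiv j ((p : MvPowerSeries (Fin n) K) * MvPowerSeries.X j₀)) *
            pderiv i (ψ (MvPowerSeries.X j))
          = (if j₀ = j then ψ (p : MvPowerSeries (Fin n) K) *
                pderiv i (ψ (MvPowerSeries.X j)) else 0)
            + ψ (MvPowerSeries.X j₀) *
              (ψ (pderiv j (p : MvPowerSeries (Fin n) K)) *
                pderiv i (ψ (MvPowerSeries.X j))) := by
        intro j
        rw [pderiv_mul, pderiv_X]
        split_ifs with h
        · rw [mul_one, map_add, map_mul, add_mul]
          ring
        · rw [mul_zero, zero_add, map_mul]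
          ring
      rw [Finset.sum_congr rfl (fun j _ => hterm j), Finset.sum_add_distrib,
        Finset.sum_ite_eq, if_pos (Finset.mem_univ j₀)]

theorem chainRule (φ : MvPowerSeries (Fin n) K ≃ₐ[K] MvPowerSeries (Fin n) K)
    (f : MvPowerSeries (Fin n) K) (i : Fin n) :
    pderiv i (φ f) = ∑ j : Fin n, φ (pderiv j f) * pderiv i (φ (MvPowerSeries.X j)) := by
  have hdiff : ∀ N : ℕ,
      pderiv i (φ f) - ∑ j : Fin n, φ (pderiv j f) * pderiv i (φ (MvPowerSeries.X j))
        ∈ lowOrder n K N := by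
    intro N
    set p := truncP (N + 1) f with hp
    set r := f - (p : MvPowerSeries (Fin n) K) with hr
    have hrmem : r ∈ lowOrder n K (N + 1) := sub_truncP_mem _ _
    have hf : f = (p : MvPowerSeries (Fin n) K) + r := by rw [hr]; ring
    have hpoly := polyChain φ.toAlgHom p i
    change pderiv i (φ (p : MvPowerSeries (Fin n) K)) = ∑ j : Fin n,
      φ (pderiv j (p : MvPowerSeries (Fin n) K)) * pderiv i (φ (MvPowerSeries.X j)) at hpoly
    have hL : pderiv i (φ f) = pderiv i (φ (p : MvPowerSeries (Fin n) K)) + pderiv i (φ r) := by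
      rw [hf, map_add, pderiv_add]
    have hsplit : ∀ j : Fin n, φ (pderiv j f)
        = φ (pderiv j (p : MvPowerSeries (Fin n) K)) + φ (pderiv j r) := by
      intro j
      rw [hf, pderiv_add, map_add]
    have e1 : pderiv i (φ f) - ∑ j : Fin n, φ (pderiv j f) * pderiv i (φ (MvPowerSeries.X j))
        = pderiv i (φ r) - ∑ j : Fin n, φ (pderiv j r) * pderiv i (φ (MvPowerSeries.X j)) := by
      rw [hL, hpoly]
      simp only [hsplit, add_mul]
      rw [Finset.sum_add_distrib]
      ring
    rw [e1]
    refine sub_mem (pderiv_mem_lowOrder i (apply_mem_lowOrder φ hrmem)) (Ideal.sum_mem _ ?_)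
    intro j _
    exact Ideal.mul_mem_right _ _ (apply_mem_lowOrder φ (pderiv_mem_lowOrder j hrmem))
  have h0 : pderiv i (φ f) - ∑ j : Fin n, φ (pderiv j f) * pderiv i (φ (MvPowerSeries.X j))
      = 0 := by
    ext d
    rw [map_zero]
    exact hdiff (deg d + 1) d (Nat.lt_succ_self _)
  exact sub_eq_zero.mp h0

end TjurinaAux

namespace TjurinaAux2
variable {n : ℕ} {K : Type} [Field K]
open TjurinaAux Finset

theorem tjurina_map (φ : MvPowerSeries (Fin n) K ≃ₐ[K] MvPowerSeries (Fin n) K)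
    (f : MvPowerSeries (Fin n) K) :
    tjurinaIdeal (φ f) = Ideal.map φ (tjurinaIdeal f) := by
  have hmap : Ideal.map φ (tjurinaIdeal f)
      = Ideal.span {φ f} ⊔ Ideal.span (Set.range fun j => φ (pderiv j f)) := by
    rw [tjurinaIdeal, jacobianIdeal, Ideal.map_sup, Ideal.map_span, Ideal.map_span,
      Set.image_singleton, ← Set.range_comp]
    rfl
  rw [hmap, tjurinaIdeal, jacobianIdeal]
  apply le_antisymm
  · apply sup_le le_sup_left
    rw [Ideal.span_le]
    rintro _ ⟨i, rfl⟩
    show pderiv i (φ f) ∈ _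
    rw [chainRule φ f i]
    apply Ideal.sum_mem
    intro j _
    apply Ideal.mul_mem_right
    exact Ideal.mem_sup_right (Ideal.subset_span ⟨j, rfl⟩)
  · apply sup_le le_sup_left
    rw [Ideal.span_le]
    rintro _ ⟨j, rfl⟩
    show φ (pderiv j f) ∈ _
    have hchain := chainRule φ.symm (φ f) j
    rw [AlgEquiv.symm_apply_apply] at hchain
    have happ := congrArg φ hchain
    rw [map_sum] at happ
    rw [happ]
    apply Ideal.sum_mem
    intro k _
    rw [map_mul, AlgEquiv.apply_symm_apply]
    apply Ideal.mul_mem_right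
    exact Ideal.mem_sup_right (Ideal.subset_span ⟨k, rfl⟩)

theorem tjurina_unit_le (u : (MvPowerSeries (Fin n) K)ˣ) (g : MvPowerSeries (Fin n) K) :
    tjurinaIdeal ((u : MvPowerSeries (Fin n) K) * g) ≤ tjurinaIdeal g := by
  rw [tjurinaIdeal, jacobianIdeal]
  apply sup_le
  · rw [Ideal.span_le, Set.singleton_subset_iff]
    exact Ideal.mul_mem_left _ _ (Ideal.mem_sup_left (Ideal.subset_span rfl))
  · rw [Ideal.span_le]
    rintro _ ⟨i, rfl⟩
    show pderiv i ((u : MvPowerSeries (Fin n) K) * g) ∈ _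
    rw [pderiv_mul]
    apply Ideal.add_mem
    · exact Ideal.mul_mem_left _ _ (Ideal.mem_sup_right (Ideal.subset_span ⟨i, rfl⟩))
    · exact Ideal.mul_mem_right _ _ (Ideal.mem_sup_left (Ideal.subset_span rfl))

theorem tjurina_unit (u : (MvPowerSeries (Fin n) K)ˣ) (g : MvPowerSeries (Fin n) K) :
    tjurinaIdeal ((u : MvPowerSeries (Fin n) K) * g) = tjurinaIdeal g := by
  apply le_antisymm (tjurina_unit_le u g)
  have h := tjurina_unit_le u⁻¹ ((u : MvPowerSeries (Fin n) K) * g)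
  rw [← mul_assoc] at h
  rw [show ((u⁻¹ : (MvPowerSeries (Fin n) K)ˣ) : MvPowerSeries (Fin n) K)
      * (u : MvPowerSeries (Fin n) K) = 1 from u.inv_mul, one_mul] at h
  exact h

end TjurinaAux2

/-- `T(u·φ(f)) = φ(T(f))` for a unit `u` and a `K`-algebra
automorphism `φ`; in particular the Tjurina number is invariant under
contact equivalence. -/
theorem tjurinaIdeal_map_algEquiv
    {n : ℕ} {K : Type} [Field K] (f : MvPowerSeries (Fin n) K)
    (u : (MvPowerSeries (Fin n) K)ˣ)
    (φ : MvPowerSeries (Fin n) K ≃ₐ[K] MvPowerSeries (Fin n) K) :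
    tjurinaIdeal ((u : MvPowerSeries (Fin n) K) * φ f) =
        Ideal.map φ (tjurinaIdeal f) ∧
      ∀ g : MvPowerSeries (Fin n) K, ContactEquiv f g →
        Module.rank K (MvPowerSeries (Fin n) K ⧸ tjurinaIdeal f) =
          Module.rank K (MvPowerSeries (Fin n) K ⧸ tjurinaIdeal g) := by
  constructor
  · rw [TjurinaAux2.tjurina_unit u (φ f), TjurinaAux2.tjurina_map φ f]
  · intro g hg
    obtain ⟨v, ψ, hfg⟩ := hg
    have hT : tjurinaIdeal f = Ideal.map ψ (tjurinaIdeal g) := by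
      rw [hfg, TjurinaAux2.tjurina_unit v (ψ g), TjurinaAux2.tjurina_map ψ g]
    have e : (MvPowerSeries (Fin n) K ⧸ tjurinaIdeal g) ≃ₐ[K]
        MvPowerSeries (Fin n) K ⧸ tjurinaIdeal f :=
      Ideal.quotientEquivAlg (tjurinaIdeal g) (tjurinaIdeal f) ψ (by rw [hT]; rfl)
    exact e.toLinearEquiv.rank_eq.symm
end
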